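/- arXiv:1912.04445 — 4 statements merged into one kernel-verified Lean document; each statement's English description precedes it below -/
import Mathlib

section
/- Neither the cylindrical board 6′×5 nor the cylindrical board 5′×6 admits a fault-free domino tiling. -/
/-- Adjacency on the cylindrical board `a′ × b` (height `a`, circumference `b`):
cells `(i,j)` and `(i+1,j)` (vertical neighbors) or `(i,j)` and `(i,j+1)` with
addition in `ZMod b` (horizontal neighbors, wrapping around). -/
def cylAdj (a b : ℕ) (c d : Fin a × ZMod b) : Prop :=
  (c.2 = d.2 ∧ ((c.1 : ℕ) + 1 = (d.1 : ℕ) ∨ (d.1 : ℕ) + 1 = (c.1 : ℕ))) ∨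
  (c.1 = d.1 ∧ (d.2 = c.2 + 1 ∨ c.2 = d.2 + 1))

/-- A tiling of the cylindrical board: a set of dominoes (unordered pairs of
adjacent cells) such that every cell belongs to exactly one domino. -/
def cylIsTiling (a b : ℕ) (T : Set (Sym2 (Fin a × ZMod b))) : Prop :=
  (∀ p ∈ T, ∃ c d, cylAdj a b c d ∧ p = s(c, d)) ∧
  (∀ x : Fin a × ZMod b, ∃! p, p ∈ T ∧ x ∈ p)

/-- A tiling of the cylindrical board is fault-free if every horizontal fault-line
(between rows `i` and `i+1`, for `i + 1 < a`) and every vertical fault-line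
(between columns `j` and `j+1`, for `j : ZMod b`) is crossed by some domino. -/
def cylFaultFree (a b : ℕ) (T : Set (Sym2 (Fin a × ZMod b))) : Prop :=
  (∀ i : ℕ, i + 1 < a → ∃ c d : Fin a × ZMod b,
      s(c, d) ∈ T ∧ c.2 = d.2 ∧ (c.1 : ℕ) = i ∧ (d.1 : ℕ) = i + 1) ∧
  (∀ j : ZMod b, ∃ i : Fin a, s((i, j), (i, j + 1)) ∈ T)

/-- The cylindrical board `a′ × b` admits a fault-free domino tiling. -/
def cylFaultFreeTileable (a b : ℕ) : Prop :=
  ∃ T : Set (Sym2 (Fin a × ZMod b)), cylIsTiling a b T ∧ cylFaultFree a b T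

/-! ### Auxiliary machinery -/

set_option linter.unusedSectionVars false

open Finset

/-! ### Auxiliary lemmas -/

lemma my_even_card_invol {α : Type*} [DecidableEq α] (s : Finset α) (g : α → α)
    (h1 : ∀ x ∈ s, g x ∈ s) (h2 : ∀ x ∈ s, g (g x) = x) (h3 : ∀ x ∈ s, g x ≠ x) :
    Even s.card := by
  induction s using Finset.strongInduction with
  | _ s ih =>
    rcases s.eq_empty_or_nonempty with rfl | ⟨x, hx⟩
    · simp
    · have hgx := h1 x hx
      have hne := h3 x hx
      set s' := s \ {x, g x} with hs'
      have hsub : s' ⊂ s := by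
        apply Finset.sdiff_ssubset (by simp [Finset.insert_subset_iff, hx, hgx])
        simp
      have hcard : s'.card = s.card - 2 := by
        rw [hs', Finset.card_sdiff_of_subset (by simp [Finset.insert_subset_iff, hx, hgx])]
        rw [Finset.card_insert_of_notMem (by simp [Ne.symm hne]), Finset.card_singleton]
      have hmem' : ∀ y, y ∈ s' ↔ y ∈ s ∧ y ≠ x ∧ y ≠ g x := by
        intro y; simp [hs', and_assoc]
      have he : Even s'.card := by
        apply ih s' hsub
        · intro y hy
          rw [hmem'] at hy ⊢
          refine ⟨h1 y hy.1, ?_, ?_⟩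
          · intro h; apply hy.2.2; rw [← h, h2 y hy.1]
          · intro h; apply hy.2.1
            have := congrArg g h; rwa [h2 y hy.1, h2 x hx] at this
        · intro y hy; exact h2 y ((hmem' y).1 hy).1
        · intro y hy; exact h3 y ((hmem' y).1 hy).1
      have h2le : 2 ≤ s.card := by
        have hss : ({x, g x} : Finset α) ⊆ s := by simp [Finset.insert_subset_iff, hx, hgx]
        calc 2 = ({x, g x} : Finset α).card := by
                rw [Finset.card_insert_of_notMem (by simp [Ne.symm hne])]; simp
          _ ≤ s.card := Finset.card_le_card hss
      obtain ⟨m, hm⟩ := he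
      exact ⟨m + 1, by omega⟩

lemma cylAdj_symm {a b : ℕ} {x y : Fin a × ZMod b} (h : cylAdj a b x y) : cylAdj a b y x := by
  unfold cylAdj at *; tauto

lemma cylAdj_irrefl {a b : ℕ} (hb : (1 : ZMod b) ≠ 0) (x : Fin a × ZMod b) :
    ¬ cylAdj a b x x := by
  rintro (⟨-, h | h⟩ | ⟨-, h | h⟩) <;>
    first
    | omega
    | · apply hb
        have h2 : x.2 + 1 - x.2 = x.2 - x.2 := by rw [← h]
        simpa using h2

/-- Extract the "partner" function of a tiling. -/
lemma extract_partner {a b : ℕ} (T : Set (Sym2 (Fin a × ZMod b))) (ht : cylIsTiling a b T) :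
    ∃ f : Fin a × ZMod b → Fin a × ZMod b,
      (∀ x, cylAdj a b x (f x)) ∧ (∀ x, f (f x) = x) ∧
      (∀ c d, s(c, d) ∈ T → f c = d) := by
  have key : ∀ x : Fin a × ZMod b, ∃ y, cylAdj a b x y ∧
      ∀ p ∈ T, x ∈ p → p = s(x, y) := by
    intro x
    obtain ⟨p, ⟨hpT, hxp⟩, huni⟩ := ht.2 x
    obtain ⟨c, d, hcd, rfl⟩ := ht.1 p hpT
    have huni' : ∀ p' ∈ T, x ∈ p' → p' = s(c, d) := fun p' h1 h2 => huni p' ⟨h1, h2⟩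
    rcases Sym2.mem_iff.mp hxp with rfl | rfl
    · exact ⟨d, hcd, huni'⟩
    · exact ⟨c, cylAdj_symm hcd, fun p' h1 h2 => (huni' p' h1 h2).trans (Sym2.eq_swap)⟩
  choose f hadj huni using key
  have huniqT : ∀ c d, s(c, d) ∈ T → f c = d := by
    intro c d hcd
    have := huni c (s(c, d)) hcd (by simp)
    exact (Sym2.congr_right.mp this.symm)
  refine ⟨f, hadj, ?_, huniqT⟩
  intro x
  -- s(x, f x) ∈ T
  obtain ⟨p, ⟨hpT, hxp⟩, -⟩ := ht.2 x
  have hp := huni x p hpT hxp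
  have hmem : s(x, f x) ∈ T := hp ▸ hpT
  have : s(f x, x) ∈ T := by rwa [Sym2.eq_swap]
  exact huniqT (f x) x this

section Counting

variable {a b : ℕ} [NeZero b] (f : Fin a × ZMod b → Fin a × ZMod b)

/-- number of cells in row `k` matched downward (to row `k+1`) -/
def dct (k : ℕ) : ℕ :=
  (univ.filter fun x : Fin a × ZMod b => (x.1 : ℕ) = k ∧ ((f x).1 : ℕ) = k + 1).card

/-- number of cells in row `k` matched upward (to row `k-1`) -/
def uct (k : ℕ) : ℕ :=
  (univ.filter fun x : Fin a × ZMod b => (x.1 : ℕ) = k ∧ ((f x).1 : ℕ) + 1 = k).card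

/-- number of cells in column `j` matched rightward -/
def wct (j : ZMod b) : ℕ :=
  (univ.filter fun x : Fin a × ZMod b => x.2 = j ∧ f x = (x.1, j + 1)).card

/-- number of cells in column `j` matched leftward -/
def lct (j : ZMod b) : ℕ :=
  (univ.filter fun x : Fin a × ZMod b => x.2 = j ∧ f x = (x.1, j - 1)).card

variable (hadj : ∀ x, cylAdj a b x (f x)) (hinv : ∀ x, f (f x) = x)
  (hne : ∀ x, f x ≠ x)

include hinv in
lemma uct_succ (k : ℕ) : uct f (k + 1) = dct f k := by
  unfold uct dct
  apply Finset.card_nbij' f f <;> intro x hx <;> simp_all [hinv x]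

include hinv in
lemma lct_eq (j : ZMod b) : lct f j = wct f (j - 1) := by
  unfold lct wct
  apply Finset.card_nbij' f f <;> intro x hx <;>
    simp only [mem_coe, mem_filter, mem_univ, true_and] at hx ⊢
  · obtain ⟨h1, h2⟩ := hx
    constructor
    · rw [h2]
    · rw [hinv x, h2, sub_add_cancel]
      exact Prod.ext rfl h1
  · obtain ⟨h1, h2⟩ := hx
    constructor
    · rw [h2]; exact sub_add_cancel j 1
    · rw [hinv x, h2]
      exact Prod.ext rfl h1
  · exact hinv x
  · exact hinv x

lemma uct_zero : uct f 0 = 0 := by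
  unfold uct
  rw [Finset.card_eq_zero, Finset.filter_eq_empty_iff]
  intro x _; omega

lemma dct_top (k : ℕ) (hk : a ≤ k + 1) : dct f k = 0 := by
  unfold dct
  rw [Finset.card_eq_zero, Finset.filter_eq_empty_iff]
  intro x _
  have := (f x).1.isLt
  omega

include hadj in
lemma tri_row (x : Fin a × ZMod b) :
    ((f x).1 : ℕ) = (x.1 : ℕ) ∨ ((f x).1 : ℕ) + 1 = (x.1 : ℕ) ∨
      ((f x).1 : ℕ) = (x.1 : ℕ) + 1 := by
  rcases hadj x with ⟨-, h | h⟩ | ⟨h, -⟩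
  · right; right; omega
  · right; left; omega
  · left; rw [h]

include hadj hinv hne in
lemma row_eq (k : ℕ) (hk : k < a) : ∃ m, b = 2 * m + (uct f k + dct f k) := by
  classical
  set row : Finset (Fin a × ZMod b) := univ.filter fun x => (x.1 : ℕ) = k with hrow
  have hrowcard : row.card = b := by
    have h1 : row.card = (univ : Finset (ZMod b)).card := by
      apply Finset.card_nbij' (fun x => x.2) (fun j => (⟨k, hk⟩, j))
      · intro x _; exact mem_univ _
      · intro j _
        simp only [hrow, mem_coe, mem_filter, mem_univ, true_and]
      · intro x hx
        simp only [hrow, mem_coe, mem_filter, mem_univ, true_and] at hx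
        exact Prod.ext (Fin.ext hx.symm) rfl
      · intro j _; rfl
    rw [h1, Finset.card_univ, ZMod.card]
  have hsplit : row.card = (row.filter fun x => ((f x).1 : ℕ) = k).card
      + (uct f k + dct f k) := by
    rw [← Finset.card_filter_add_card_filter_not
        (p := fun x => ((f x).1 : ℕ) = k) (s := row)]
    congr 1
    rw [← Finset.card_filter_add_card_filter_not
        (p := fun x => ((f x).1 : ℕ) + 1 = k)
        (s := row.filter fun x => ¬ ((f x).1 : ℕ) = k),
      Finset.filter_filter, Finset.filter_filter]
    congr 1
    · unfold uct
      refine congrArg Finset.card (Finset.filter_congr fun x _ => ?_)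
      have htri := tri_row f hadj x
      constructor
      · intro h; omega
      · intro h; omega
    · unfold dct
      simp only [hrow, Finset.filter_filter]
      refine congrArg Finset.card (Finset.filter_congr fun x _ => ?_)
      have htri := tri_row f hadj x
      constructor
      · intro h; omega
      · intro h; omega
  have heven : Even (row.filter fun x => ((f x).1 : ℕ) = k).card := by
    apply my_even_card_invol _ f
    · intro x hx
      simp only [hrow, Finset.mem_filter, Finset.mem_univ, true_and] at hx ⊢
      rw [hinv x]
      exact ⟨hx.2, hx.1⟩
    · intro x _; exact hinv x
    · intro x _; exact hne x
  obtain ⟨m, hm⟩ := heven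
  exact ⟨m, by omega⟩

include hadj hne in
lemma tri_col (hb1 : (1 : ZMod b) ≠ 0) (hb2 : (2 : ZMod b) ≠ 0) (x : Fin a × ZMod b) :
    ((f x).2 = x.2 ∧ ¬ f x = (x.1, x.2 + 1) ∧ ¬ f x = (x.1, x.2 - 1)) ∨
    (f x = (x.1, x.2 + 1) ∧ ¬ (f x).2 = x.2 ∧ ¬ f x = (x.1, x.2 - 1)) ∨
    (f x = (x.1, x.2 - 1) ∧ ¬ (f x).2 = x.2 ∧ ¬ f x = (x.1, x.2 + 1)) := by
  have hp1 : x.2 + 1 ≠ x.2 := fun h => hb1 (add_eq_left.mp h)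
  have hm1 : x.2 - 1 ≠ x.2 := fun h => hb1 (sub_eq_self.mp h)
  have hpm : x.2 + 1 ≠ x.2 - 1 := fun h => hb2 (by
    have h0 := sub_eq_zero_of_eq h
    rw [show x.2 + 1 - (x.2 - 1) = 2 from by ring] at h0
    exact h0)
  rcases hadj x with ⟨h, hv⟩ | ⟨h1, h2 | h2⟩
  · -- vertical : columns equal
    left
    refine ⟨h.symm, ?_, ?_⟩
    · intro hc; rw [hc] at h; exact hp1 h.symm
    · intro hc; rw [hc] at h; exact hm1 h.symm
  · -- f x = (x.1, x.2 + 1)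
    right; left
    have hfx : f x = (x.1, x.2 + 1) := Prod.ext h1.symm h2
    refine ⟨hfx, ?_, ?_⟩
    · rw [hfx]; exact hp1
    · rw [hfx]; intro hc
      exact hpm (congrArg Prod.snd hc)
  · -- x.2 = (f x).2 + 1, i.e. f x = (x.1, x.2 - 1)
    right; right
    have hfx : f x = (x.1, x.2 - 1) := Prod.ext h1.symm (by rw [h2]; ring)
    refine ⟨hfx, ?_, ?_⟩
    · rw [hfx]; exact hm1
    · rw [hfx]; intro hc
      exact hpm (congrArg Prod.snd hc).symm

include hadj hinv hne in
lemma col_eq (hb1 : (1 : ZMod b) ≠ 0) (hb2 : (2 : ZMod b) ≠ 0) (j : ZMod b) :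
    ∃ m, a = 2 * m + (wct f (j - 1) + wct f j) := by
  classical
  rw [← lct_eq f hinv j]
  set col : Finset (Fin a × ZMod b) := univ.filter fun x => x.2 = j with hcol
  have hcolcard : col.card = a := by
    have h1 : col.card = (univ : Finset (Fin a)).card := by
      apply Finset.card_nbij' (fun x => x.1) (fun i => (i, j))
      · intro x _; exact mem_univ _
      · intro i _; simp only [hcol, mem_coe, mem_filter, mem_univ, true_and]
      · intro x hx
        simp only [hcol, mem_coe, mem_filter, mem_univ, true_and] at hx
        exact Prod.ext rfl hx.symm
      · intro i _; rfl
    rw [h1, Finset.card_univ, Fintype.card_fin]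
  have hsplit : col.card = (col.filter fun x => (f x).2 = x.2).card
      + (lct f j + wct f j) := by
    rw [← Finset.card_filter_add_card_filter_not
        (p := fun x => (f x).2 = x.2) (s := col)]
    congr 1
    rw [← Finset.card_filter_add_card_filter_not
        (p := fun x => f x = (x.1, x.2 - 1))
        (s := col.filter fun x => ¬ (f x).2 = x.2),
      Finset.filter_filter, Finset.filter_filter]
    congr 1
    · unfold lct
      refine congrArg Finset.card (Finset.filter_congr fun x _ => ?_)
      constructor
      · rintro ⟨h1, -, h2⟩
        refine ⟨h1, ?_⟩
        rw [h2, h1]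
      · rintro ⟨h1, h2⟩
        subst h1
        rcases tri_col f hadj hne hb1 hb2 x with h | h | h <;> tauto
    · unfold wct
      simp only [hcol, Finset.filter_filter]
      refine congrArg Finset.card (Finset.filter_congr fun x _ => ?_)
      constructor
      · rintro ⟨⟨h1, h2⟩, h3⟩
        subst h1
        rcases tri_col f hadj hne hb1 hb2 x with h | h | h <;> tauto
      · rintro ⟨h1, h2⟩
        subst h1
        rcases tri_col f hadj hne hb1 hb2 x with h | h | h <;> tauto
  have heven : Even (col.filter fun x => (f x).2 = x.2).card := by
    apply my_even_card_invol _ f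
    · intro x hx
      simp only [hcol, Finset.mem_filter, Finset.mem_univ, true_and] at hx ⊢
      rw [hinv x]
      exact ⟨hx.2.trans hx.1, hx.2.symm⟩
    · intro x _; exact hinv x
    · intro x _; exact hne x
  obtain ⟨m, hm⟩ := heven
  exact ⟨m, by omega⟩

end Counting

section Total
open Finset
variable {a b : ℕ} [NeZero b] (f : Fin a × ZMod b → Fin a × ZMod b)
variable (hadj : ∀ x, cylAdj a b x (f x)) (hinv : ∀ x, f (f x) = x)
  (hne : ∀ x, f x ≠ x)

include hadj hinv hne in
lemma total_eq (hb1 : (1 : ZMod b) ≠ 0) (hb2 : (2 : ZMod b) ≠ 0) :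
    a * b = 2 * (∑ k ∈ Finset.range a, dct f k) + 2 * (∑ j : ZMod b, wct f j) := by
  classical
  have hpm : ∀ x : Fin a × ZMod b, ¬ (f x = (x.1, x.2 + 1) ∧ f x = (x.1, x.2 - 1)) := by
    rintro x ⟨h1, h2⟩
    have h := (h1.symm.trans h2)
    have h3 := congrArg Prod.snd h
    simp only at h3
    apply hb2
    have h0 := sub_eq_zero_of_eq h3
    rw [show x.2 + 1 - (x.2 - 1) = 2 from by ring] at h0
    exact h0
  set D := univ.filter fun x : Fin a × ZMod b => ((f x).1 : ℕ) = (x.1 : ℕ) + 1 with hD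
  set R := univ.filter fun x : Fin a × ZMod b => f x = (x.1, x.2 + 1) with hR
  have husplit : (univ : Finset (Fin a × ZMod b)).card
      = D.card + (D.card + (R.card + R.card)) := by
    rw [← Finset.card_filter_add_card_filter_not
        (p := fun x : Fin a × ZMod b => ((f x).1 : ℕ) = (x.1 : ℕ) + 1) (s := univ)]
    congr 1
    rw [← Finset.card_filter_add_card_filter_not
        (p := fun x : Fin a × ZMod b => ((f x).1 : ℕ) + 1 = (x.1 : ℕ))
        (s := univ.filter fun x : Fin a × ZMod b => ¬ ((f x).1 : ℕ) = (x.1 : ℕ) + 1),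
      Finset.filter_filter]
    congr 1
    · -- up-matched cells are in bijection with down-matched cells
      apply Finset.card_nbij' f f
      · intro x hx
        simp only [hD, mem_coe, mem_filter, mem_univ, true_and] at hx ⊢
        rw [hinv x]
        omega
      · intro x hx
        simp only [hD, mem_coe, mem_filter, mem_univ, true_and] at hx ⊢
        rw [hinv x]
        omega
      · intro x _; exact hinv x
      · intro x _; exact hinv x
    · rw [Finset.filter_filter]
      rw [← Finset.card_filter_add_card_filter_not
          (p := fun x : Fin a × ZMod b => f x = (x.1, x.2 + 1))
          (s := univ.filter fun x : Fin a × ZMod b =>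
            (¬ ((f x).1 : ℕ) = (x.1 : ℕ) + 1 ∧ ¬ ((f x).1 : ℕ) + 1 = (x.1 : ℕ))),
        Finset.filter_filter, Finset.filter_filter]
      congr 1
      · rw [hR]
        refine congrArg Finset.card (Finset.filter_congr fun x _ => ?_)
        constructor
        · rintro ⟨-, h⟩; exact h
        · intro h
          have h1 : ((f x).1 : ℕ) = (x.1 : ℕ) := by rw [h]
          exact ⟨⟨by omega, by omega⟩, h⟩
      · -- left-matched cells in bijection with right-matched
        have hLpred : ∀ x : Fin a × ZMod b,
            ((¬ ((f x).1 : ℕ) = (x.1 : ℕ) + 1 ∧ ¬ ((f x).1 : ℕ) + 1 = (x.1 : ℕ)) ∧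
              ¬ f x = (x.1, x.2 + 1)) ↔ f x = (x.1, x.2 - 1) := by
          intro x
          constructor
          · rintro ⟨⟨hnd, hnu⟩, hnr⟩
            rcases hadj x with ⟨-, h | h⟩ | ⟨heq, h | h⟩
            · omega
            · omega
            · exact absurd (show f x = (x.1, x.2 + 1) from
                Prod.ext_iff.mpr ⟨heq.symm, h⟩) hnr
            · exact show f x = (x.1, x.2 - 1) from
                Prod.ext_iff.mpr ⟨heq.symm, eq_sub_of_add_eq h.symm⟩
          · intro h
            have h1 : ((f x).1 : ℕ) = (x.1 : ℕ) := by rw [h]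
            refine ⟨⟨by omega, by omega⟩, fun hr => hpm x ⟨hr, h⟩⟩
        rw [Finset.filter_congr (fun x _ => hLpred x)]
        apply Finset.card_nbij' f f
        · intro x hx
          simp only [hR, mem_coe, mem_filter, mem_univ, true_and] at hx ⊢
          rw [hinv x, hx]
          exact Prod.ext rfl (sub_add_cancel x.2 1).symm
        · intro x hx
          simp only [hR, mem_coe, mem_filter, mem_univ, true_and] at hx ⊢
          rw [hinv x, hx]
          exact Prod.ext rfl (add_sub_cancel_right x.2 1).symm
        · intro x _; exact hinv x
        · intro x _; exact hinv x
  have hDcard : D.card = ∑ k ∈ Finset.range a, dct f k := by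
    rw [Finset.card_eq_sum_card_fiberwise
      (f := fun x : Fin a × ZMod b => (x.1 : ℕ)) (t := Finset.range a)
      (fun x _ => Finset.mem_range.mpr x.1.isLt)]
    refine Finset.sum_congr rfl fun k _ => ?_
    unfold dct
    rw [hD, Finset.filter_filter]
    refine congrArg Finset.card (Finset.filter_congr fun x _ => ?_)
    constructor
    · intro h; omega
    · intro h; omega
  have hRcard : R.card = ∑ j : ZMod b, wct f j := by
    rw [Finset.card_eq_sum_card_fiberwise
      (f := fun x : Fin a × ZMod b => x.2) (t := Finset.univ)
      (fun x _ => Finset.mem_univ _)]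
    refine Finset.sum_congr rfl fun j _ => ?_
    unfold wct
    rw [hR, Finset.filter_filter]
    refine congrArg Finset.card (Finset.filter_congr fun x _ => ?_)
    constructor
    · rintro ⟨h1, h2⟩
      subst h2
      exact ⟨rfl, h1⟩
    · rintro ⟨h1, h2⟩
      subst h1
      exact ⟨h2, rfl⟩
  have huniv : (univ : Finset (Fin a × ZMod b)).card = a * b := by
    rw [Finset.card_univ, Fintype.card_prod, Fintype.card_fin, ZMod.card]
  omega

end Total

lemma cyl_not_65 : ¬ cylFaultFreeTileable 6 5 := by
  rintro ⟨T, ht, hffH, hffV⟩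
  obtain ⟨f, hadj, hinv, huniq⟩ := extract_partner T ht
  have hb1 : (1 : ZMod 5) ≠ 0 := by decide
  have hb2 : (2 : ZMod 5) ≠ 0 := by decide
  have hne : ∀ x, f x ≠ x := by
    intro x h
    have hx := hadj x
    rw [h] at hx
    exact cylAdj_irrefl hb1 x hx
  have hd : ∀ k : ℕ, k + 1 < 6 → 1 ≤ dct f k := by
    intro k hk
    obtain ⟨c, d, hmem, hcd2, hc1, hd1⟩ := hffH k hk
    have hfc : f c = d := huniq c d hmem
    refine Finset.card_pos.mpr ⟨c, ?_⟩
    simp only [Finset.mem_filter, Finset.mem_univ, true_and]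
    exact ⟨hc1, by rw [hfc]; exact hd1⟩
  have hw : ∀ j : ZMod 5, 1 ≤ wct f j := by
    intro j
    obtain ⟨i, hmem⟩ := hffV j
    have hfc : f (i, j) = (i, j + 1) := huniq _ _ hmem
    exact Finset.card_pos.mpr ⟨(i, j), Finset.mem_filter.mpr
      ⟨Finset.mem_univ _, rfl, by rw [hfc]⟩⟩
  have hd0 := hd 0 (by norm_num); have hd1 := hd 1 (by norm_num)
  have hd2 := hd 2 (by norm_num); have hd3 := hd 3 (by norm_num)
  have hd4 := hd 4 (by norm_num)
  have hw0 := hw 0; have hw1 := hw 1; have hw2 := hw 2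
  have hw3 := hw 3; have hw4 := hw 4
  have e0 := row_eq f hadj hinv hne 0 (by norm_num)
  have e1 := row_eq f hadj hinv hne 1 (by norm_num)
  have e2 := row_eq f hadj hinv hne 2 (by norm_num)
  have e3 := row_eq f hadj hinv hne 3 (by norm_num)
  have e4 := row_eq f hadj hinv hne 4 (by norm_num)
  have e5 := row_eq f hadj hinv hne 5 (by norm_num)
  rw [uct_zero] at e0
  rw [show uct f 1 = dct f 0 from uct_succ f hinv 0] at e1
  rw [show uct f 2 = dct f 1 from uct_succ f hinv 1] at e2
  rw [show uct f 3 = dct f 2 from uct_succ f hinv 2] at e3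
  rw [show uct f 4 = dct f 3 from uct_succ f hinv 3] at e4
  rw [show uct f 5 = dct f 4 from uct_succ f hinv 4,
    dct_top f 5 (by norm_num)] at e5
  have c0 := col_eq f hadj hinv hne hb1 hb2 0
  have c1 := col_eq f hadj hinv hne hb1 hb2 1
  have c2 := col_eq f hadj hinv hne hb1 hb2 2
  have c3 := col_eq f hadj hinv hne hb1 hb2 3
  have c4 := col_eq f hadj hinv hne hb1 hb2 4
  rw [show (0 : ZMod 5) - 1 = 4 from by decide] at c0
  rw [show (1 : ZMod 5) - 1 = 0 from by decide] at c1
  rw [show (2 : ZMod 5) - 1 = 1 from by decide] at c2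
  rw [show (3 : ZMod 5) - 1 = 2 from by decide] at c3
  rw [show (4 : ZMod 5) - 1 = 3 from by decide] at c4
  have hdtop : dct f 5 = 0 := dct_top f 5 (by norm_num)
  have htot := total_eq f hadj hinv hne hb1 hb2
  rw [Finset.sum_range_succ, Finset.sum_range_succ, Finset.sum_range_succ,
    Finset.sum_range_succ, Finset.sum_range_succ, Finset.sum_range_succ,
    Finset.sum_range_zero] at htot
  rw [show (Finset.univ : Finset (ZMod 5)) = {0, 1, 2, 3, 4} from by decide] at htot
  rw [Finset.sum_insert (by decide), Finset.sum_insert (by decide),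
    Finset.sum_insert (by decide), Finset.sum_insert (by decide),
    Finset.sum_singleton] at htot
  obtain ⟨m0, e0⟩ := e0
  obtain ⟨m1, e1⟩ := e1
  obtain ⟨m2, e2⟩ := e2
  obtain ⟨m3, e3⟩ := e3
  obtain ⟨m4, e4⟩ := e4
  obtain ⟨m5, e5⟩ := e5
  obtain ⟨n0, c0⟩ := c0
  obtain ⟨n1, c1⟩ := c1
  obtain ⟨n2, c2⟩ := c2
  obtain ⟨n3, c3⟩ := c3
  obtain ⟨n4, c4⟩ := c4
  omega

lemma cyl_not_56 : ¬ cylFaultFreeTileable 5 6 := by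
  rintro ⟨T, ht, hffH, hffV⟩
  obtain ⟨f, hadj, hinv, huniq⟩ := extract_partner T ht
  have hb1 : (1 : ZMod 6) ≠ 0 := by decide
  have hb2 : (2 : ZMod 6) ≠ 0 := by decide
  have hne : ∀ x, f x ≠ x := by
    intro x h
    have hx := hadj x
    rw [h] at hx
    exact cylAdj_irrefl hb1 x hx
  have hd : ∀ k : ℕ, k + 1 < 5 → 1 ≤ dct f k := by
    intro k hk
    obtain ⟨c, d, hmem, hcd2, hc1, hd1⟩ := hffH k hk
    have hfc : f c = d := huniq c d hmem
    refine Finset.card_pos.mpr ⟨c, ?_⟩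
    simp only [Finset.mem_filter, Finset.mem_univ, true_and]
    exact ⟨hc1, by rw [hfc]; exact hd1⟩
  have hw : ∀ j : ZMod 6, 1 ≤ wct f j := by
    intro j
    obtain ⟨i, hmem⟩ := hffV j
    have hfc : f (i, j) = (i, j + 1) := huniq _ _ hmem
    exact Finset.card_pos.mpr ⟨(i, j), Finset.mem_filter.mpr
      ⟨Finset.mem_univ _, rfl, by rw [hfc]⟩⟩
  have hd0 := hd 0 (by norm_num); have hd1 := hd 1 (by norm_num)
  have hd2 := hd 2 (by norm_num); have hd3 := hd 3 (by norm_num)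
  have hw0 := hw 0; have hw1 := hw 1; have hw2 := hw 2
  have hw3 := hw 3; have hw4 := hw 4; have hw5 := hw 5
  have e0 := row_eq f hadj hinv hne 0 (by norm_num)
  have e1 := row_eq f hadj hinv hne 1 (by norm_num)
  have e2 := row_eq f hadj hinv hne 2 (by norm_num)
  have e3 := row_eq f hadj hinv hne 3 (by norm_num)
  have e4 := row_eq f hadj hinv hne 4 (by norm_num)
  rw [uct_zero] at e0
  rw [show uct f 1 = dct f 0 from uct_succ f hinv 0] at e1
  rw [show uct f 2 = dct f 1 from uct_succ f hinv 1] at e2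
  rw [show uct f 3 = dct f 2 from uct_succ f hinv 2] at e3
  rw [show uct f 4 = dct f 3 from uct_succ f hinv 3,
    dct_top f 4 (by norm_num)] at e4
  have c0 := col_eq f hadj hinv hne hb1 hb2 0
  have c1 := col_eq f hadj hinv hne hb1 hb2 1
  have c2 := col_eq f hadj hinv hne hb1 hb2 2
  have c3 := col_eq f hadj hinv hne hb1 hb2 3
  have c4 := col_eq f hadj hinv hne hb1 hb2 4
  have c5 := col_eq f hadj hinv hne hb1 hb2 5
  rw [show (0 : ZMod 6) - 1 = 5 from by decide] at c0
  rw [show (1 : ZMod 6) - 1 = 0 from by decide] at c1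
  rw [show (2 : ZMod 6) - 1 = 1 from by decide] at c2
  rw [show (3 : ZMod 6) - 1 = 2 from by decide] at c3
  rw [show (4 : ZMod 6) - 1 = 3 from by decide] at c4
  rw [show (5 : ZMod 6) - 1 = 4 from by decide] at c5
  have hdtop : dct f 4 = 0 := dct_top f 4 (by norm_num)
  have htot := total_eq f hadj hinv hne hb1 hb2
  rw [Finset.sum_range_succ, Finset.sum_range_succ, Finset.sum_range_succ,
    Finset.sum_range_succ, Finset.sum_range_succ, Finset.sum_range_zero] at htot
  rw [show (Finset.univ : Finset (ZMod 6)) = {0, 1, 2, 3, 4, 5} from by decide] at htot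
  rw [Finset.sum_insert (by decide), Finset.sum_insert (by decide),
    Finset.sum_insert (by decide), Finset.sum_insert (by decide),
    Finset.sum_insert (by decide), Finset.sum_singleton] at htot
  obtain ⟨m0, e0⟩ := e0
  obtain ⟨m1, e1⟩ := e1
  obtain ⟨m2, e2⟩ := e2
  obtain ⟨m3, e3⟩ := e3
  obtain ⟨m4, e4⟩ := e4
  obtain ⟨n0, c0⟩ := c0
  obtain ⟨n1, c1⟩ := c1
  obtain ⟨n2, c2⟩ := c2
  obtain ⟨n3, c3⟩ := c3
  obtain ⟨n4, c4⟩ := c4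
  obtain ⟨n5, c5⟩ := c5
  omega


/-- Neither the cylindrical board `6′ × 5` nor the cylindrical board `5′ × 6`
admits a fault-free domino tiling. -/
theorem cyl_not_faultFree_6'5_and_5'6 :
    ¬ cylFaultFreeTileable 6 5 ∧ ¬ cylFaultFreeTileable 5 6 := by
  exact ⟨cyl_not_65, cyl_not_56⟩
end

section
/- For all natural numbers n and m, each of the torus boards (8+2n)′×(7+2m)′, (9+2n)′×(6+2m)′, and (10+2n)′×(5+2m)′ admits a fault-free domino tiling. -/
/-- Adjacency on the torus board `a′ × b′`: cells `(i,j)` and `(i+1,j)` with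
addition in `ZMod a` (vertical neighbors, wrapping around) or `(i,j)` and
`(i,j+1)` with addition in `ZMod b` (horizontal neighbors, wrapping around). -/
def torAdj (a b : ℕ) (c d : ZMod a × ZMod b) : Prop :=
  (c.2 = d.2 ∧ (d.1 = c.1 + 1 ∨ c.1 = d.1 + 1)) ∨
  (c.1 = d.1 ∧ (d.2 = c.2 + 1 ∨ c.2 = d.2 + 1))

/-- A tiling of the torus board: a set of dominoes (unordered pairs of adjacent
cells) such that every cell belongs to exactly one domino. -/
def torIsTiling (a b : ℕ) (T : Set (Sym2 (ZMod a × ZMod b))) : Prop :=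
  (∀ p ∈ T, ∃ c d, torAdj a b c d ∧ p = s(c, d)) ∧
  (∀ x : ZMod a × ZMod b, ∃! p, p ∈ T ∧ x ∈ p)

/-- A tiling of the torus board is fault-free if every horizontal fault-line
(between rows `i` and `i+1`, for `i : ZMod a`) and every vertical fault-line
(between columns `j` and `j+1`, for `j : ZMod b`) is crossed by some domino. -/
def torFaultFree (a b : ℕ) (T : Set (Sym2 (ZMod a × ZMod b))) : Prop :=
  (∀ i : ZMod a, ∃ j : ZMod b, s((i, j), (i + 1, j)) ∈ T) ∧
  (∀ j : ZMod b, ∃ i : ZMod a, s((i, j), (i, j + 1)) ∈ T)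

/-- The torus board `a′ × b′` admits a fault-free domino tiling. -/
def torFaultFreeTileable (a b : ℕ) : Prop :=
  ∃ T : Set (Sym2 (ZMod a × ZMod b)), torIsTiling a b T ∧ torFaultFree a b T

instance (a b : ℕ) (c d : ZMod a × ZMod b) : Decidable (torAdj a b c d) :=
  inferInstanceAs (Decidable ((c.2 = d.2 ∧ (d.1 = c.1 + 1 ∨ c.1 = d.1 + 1)) ∨
    (c.1 = d.1 ∧ (d.2 = c.2 + 1 ∨ c.2 = d.2 + 1))))

def GoodMatch (a b : ℕ) (f : ZMod a × ZMod b → ZMod a × ZMod b) : Prop :=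
  (∀ x, f (f x) = x) ∧ (∀ x, torAdj a b x (f x)) ∧
  (∀ i : ZMod a, ∃ j : ZMod b, f (i, j) = (i + 1, j)) ∧
  (∀ j : ZMod b, ∃ i : ZMod a, f (i, j) = (i, j + 1))

def GM (a b : ℕ) : Prop := ∃ f, GoodMatch a b f

/-- embedding of rows of `ZMod a` into `ZMod (a+2)`: `0 ↦ 0`, `i ↦ i + 2` else. -/
def eup (a : ℕ) (i : ZMod a) : ZMod (a + 2) :=
  if i = 0 then 0 else ((i.val + 2 : ℕ) : ZMod (a + 2))

lemma eup_zero (a : ℕ) : eup a 0 = 0 := if_pos rfl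

lemma eup_val {a : ℕ} [NeZero a] (i : ZMod a) (hi : i ≠ 0) : (eup a i).val = i.val + 2 := by
  have := ZMod.val_lt i
  rw [eup, if_neg hi]
  exact ZMod.val_cast_of_lt (by omega)

lemma eup_back {a : ℕ} [NeZero a] (i' : ZMod (a + 2)) (h3 : 3 ≤ i'.val) :
    eup a ((i'.val - 2 : ℕ) : ZMod a) = i' := by
  have hlt : i'.val < a + 2 := ZMod.val_lt i'
  have hr : (((i'.val - 2 : ℕ) : ZMod a)).val = i'.val - 2 := ZMod.val_cast_of_lt (by omega)
  have hrne : ((i'.val - 2 : ℕ) : ZMod a) ≠ 0 := by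
    intro h
    rw [h, ZMod.val_zero] at hr
    omega
  apply ZMod.val_injective
  rw [eup_val _ hrne, hr]
  omega

lemma eup_succ {a : ℕ} (ha : 3 ≤ a) (i : ZMod a) (hi : i ≠ 0) :
    eup a (i + 1) = eup a i + 1 := by
  haveI : NeZero a := ⟨by omega⟩
  haveI : Fact (1 < a) := ⟨by omega⟩
  have hk : i.val < a := ZMod.val_lt i
  have hk1 : 1 ≤ i.val := by
    rcases Nat.eq_zero_or_pos i.val with h | h
    · exact absurd ((ZMod.val_eq_zero i).mp h) hi
    · exact h
  have hi' : i = ((i.val : ℕ) : ZMod a) := (ZMod.natCast_zmod_val i).symm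
  have hrhs : eup a i + 1 = ((i.val + 3 : ℕ) : ZMod (a + 2)) := by
    rw [eup, if_neg hi]
    push_cast
    ring
  have hvo : (1 : ZMod a).val = 1 := ZMod.val_one a
  by_cases hk2 : i.val = a - 1
  · have h1 : i + 1 = 0 := by
      rw [hi']
      have h2 : ((i.val : ℕ) : ZMod a) + 1 = ((i.val + 1 : ℕ) : ZMod a) := by push_cast; ring
      rw [h2, show i.val + 1 = a by omega, ZMod.natCast_self]
    rw [h1, eup_zero, hrhs, show i.val + 3 = a + 2 by omega, ZMod.natCast_self]
  · have hv1 : (i + 1).val = i.val + 1 := by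
      rw [ZMod.val_add_of_lt (by rw [hvo]; omega), hvo]
    have hne : i + 1 ≠ 0 := by
      intro h
      rw [h, ZMod.val_zero] at hv1
      omega
    rw [eup, if_neg hne, hv1, hrhs]

/-- step matching: insert two rows (1 and 2) below row 0 -/
def fstep (a b : ℕ) (f : ZMod a × ZMod b → ZMod a × ZMod b)
    (x : ZMod (a + 2) × ZMod b) : ZMod (a + 2) × ZMod b :=
  if x.1.val = 1 then (if f (0, x.2) = (1, x.2) then (0, x.2) else (2, x.2))
  else if x.1.val = 2 then (if f (0, x.2) = (1, x.2) then (3, x.2) else (1, x.2))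
  else if x.1.val = 0 then
    (if f (0, x.2) = (1, x.2) then (1, x.2)
     else (eup a (f (0, x.2)).1, (f (0, x.2)).2))
  else if x.1.val = 3 ∧ f (0, x.2) = (1, x.2) then (2, x.2)
  else (eup a (f (((x.1.val - 2 : ℕ) : ZMod a), x.2)).1,
        (f (((x.1.val - 2 : ℕ) : ZMod a), x.2)).2)

section spec
variable {a b : ℕ} (f : ZMod a × ZMod b → ZMod a × ZMod b)

lemma fstep_val0 {i : ZMod (a + 2)} (hi : i.val = 0) (j : ZMod b) :
    fstep a b f (i, j) =
      if f (0, j) = (1, j) then ((1 : ZMod (a + 2)), j)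
      else (eup a (f (0, j)).1, (f (0, j)).2) := by
  rw [fstep]
  dsimp only
  rw [if_neg (by omega), if_neg (by omega), if_pos hi]

lemma fstep_val1 {i : ZMod (a + 2)} (hi : i.val = 1) (j : ZMod b) :
    fstep a b f (i, j) =
      if f (0, j) = (1, j) then ((0 : ZMod (a + 2)), j) else ((2 : ZMod (a + 2)), j) := by
  rw [fstep]
  dsimp only
  rw [if_pos hi]

lemma fstep_val2 {i : ZMod (a + 2)} (hi : i.val = 2) (j : ZMod b) :
    fstep a b f (i, j) =
      if f (0, j) = (1, j) then ((3 : ZMod (a + 2)), j) else ((1 : ZMod (a + 2)), j) := by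
  rw [fstep]
  dsimp only
  rw [if_neg (by omega), if_pos hi]

lemma fstep_val3c {i : ZMod (a + 2)} (hi : i.val = 3) {j : ZMod b}
    (hc : f (0, j) = (1, j)) :
    fstep a b f (i, j) = ((2 : ZMod (a + 2)), j) := by
  rw [fstep]
  dsimp only
  rw [if_neg (by omega), if_neg (by omega), if_neg (by omega), if_pos ⟨hi, hc⟩]



lemma fstep_val_hi {i : ZMod (a + 2)} (hi : 3 ≤ i.val) {j : ZMod b}
    (hne : ¬(i.val = 3 ∧ f (0, j) = (1, j))) :
    fstep a b f (i, j) = (eup a (f (((i.val - 2 : ℕ) : ZMod a), j)).1,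
      (f (((i.val - 2 : ℕ) : ZMod a), j)).2) := by
  rw [fstep]
  dsimp only
  rw [if_neg (by omega), if_neg (by omega), if_neg (by omega), if_neg hne]

end spec
theorem GM.step {a b : ℕ} (ha : 3 ≤ a) (hb : 2 ≤ b) (h : GM a b) : GM (a + 2) b := by
  haveI : NeZero a := ⟨by omega⟩
  haveI : NeZero (a + 2) := ⟨by omega⟩
  haveI : Fact (1 < a) := ⟨by omega⟩
  haveI : Fact (1 < a + 2) := ⟨by omega⟩
  obtain ⟨f, hinv, hadj, hrow, hcol⟩ := h
  have v0 : (0 : ZMod (a + 2)).val = 0 := ZMod.val_zero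
  have v1 : (1 : ZMod (a + 2)).val = 1 := ZMod.val_one _
  have v2 : (2 : ZMod (a + 2)).val = 2 := by
    rw [show (2 : ZMod (a + 2)) = ((2 : ℕ) : ZMod (a + 2)) by push_cast; ring]
    exact ZMod.val_cast_of_lt (by omega)
  have v3 : (3 : ZMod (a + 2)).val = 3 := by
    rw [show (3 : ZMod (a + 2)) = ((3 : ℕ) : ZMod (a + 2)) by push_cast; ring]
    exact ZMod.val_cast_of_lt (by omega)
  have w1 : (1 : ZMod a).val = 1 := ZMod.val_one _
  have w2 : (2 : ZMod a).val = 2 := by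
    rw [show (2 : ZMod a) = ((2 : ℕ) : ZMod a) by push_cast; ring]
    exact ZMod.val_cast_of_lt (by omega)
  have ne01 : (0 : ZMod a) ≠ 1 := by
    intro hx
    have := congrArg ZMod.val hx
    rw [ZMod.val_zero, w1] at this
    omega
  have ne02 : (0 : ZMod a) ≠ 2 := by
    intro hx
    have := congrArg ZMod.val hx
    rw [ZMod.val_zero, w2] at this
    omega
  have vinj : ∀ x y : ZMod (a + 2), x.val = y.val → x = y := fun x y h => ZMod.val_injective _ h
  have hcoleq : ∀ x : ZMod a × ZMod b, (f x).1 ≠ x.1 → (f x).2 = x.2 := by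
    intro x hne
    rcases hadj x with ⟨h', _⟩ | ⟨h', _⟩
    · exact h'.symm
    · exact absurd h'.symm hne
  have hdet : ∀ (x : ZMod a × ZMod b) (r : ZMod a), (f x).1 = r → r ≠ x.1 → f x = (r, x.2) := by
    intro x r h' hne
    exact Prod.ext h' (hcoleq x (by rw [h']; exact hne))
  have hA0 : ∀ j : ZMod b, f (0, j) = (1, j) → f (1, j) = (0, j) := by
    intro j h'
    rw [← h']
    exact hinv (0, j)
  -- the key transport lemma for values
  have G : ∀ x : ZMod a × ZMod b, (x.1 = 0 → f (0, x.2) ≠ (1, x.2)) →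
      (x.1 = 1 → f (0, x.2) ≠ (1, x.2)) →
      fstep a b f (eup a x.1, x.2) = (eup a (f x).1, (f x).2) := by
    rintro ⟨r, j⟩ h0 h1
    dsimp only at h0 h1 ⊢
    by_cases hr0 : r = 0
    · subst hr0
      rw [eup_zero, fstep_val0 f v0 j, if_neg (h0 rfl)]
    · have hval : (eup a r).val = r.val + 2 := eup_val r hr0
      have hrv1 : 1 ≤ r.val := by
        rcases Nat.eq_zero_or_pos r.val with h' | h'
        · exact absurd ((ZMod.val_eq_zero r).mp h') hr0
        · exact h'
      have hidx : (((eup a r).val - 2 : ℕ) : ZMod a) = r := by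
        rw [hval, Nat.add_sub_cancel, ZMod.natCast_zmod_val]
      have hne : ¬((eup a r).val = 3 ∧ f (0, j) = (1, j)) := by
        rintro ⟨h3, hc⟩
        rw [hval] at h3
        have hr1 : r = 1 := by
          apply ZMod.val_injective
          rw [w1]
          omega
        exact h1 hr1 hc
      rw [fstep_val_hi f (by omega) hne, hidx]
  -- the key transport lemma for adjacency
  have Gadj : ∀ x : ZMod a × ZMod b, ¬(x.1 = 0 ∧ (f x).1 = 1) → ¬(x.1 = 1 ∧ (f x).1 = 0) →
      torAdj (a + 2) b (eup a x.1, x.2) (eup a (f x).1, (f x).2) := by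
    rintro ⟨r, j⟩ hn1 hn2
    dsimp only at hn1 hn2 ⊢
    rcases hadj (r, j) with ⟨hj, hv⟩ | ⟨hr, hh⟩
    · left
      refine ⟨hj, ?_⟩
      rcases hv with h' | h'
      · left
        have hr0 : r ≠ 0 := by
          rintro rfl
          exact hn1 ⟨rfl, by rw [h', zero_add]⟩
        rw [h']
        exact eup_succ ha r hr0
      · right
        have hp0 : (f (r, j)).1 ≠ 0 := by
          intro hp
          exact hn2 ⟨by rw [hp, zero_add] at h'; exact h', hp⟩
        rw [← eup_succ ha _ hp0]
        exact congrArg (eup a) h'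
    · right
      exact ⟨congrArg (eup a) hr, hh⟩
  refine ⟨fstep a b f, ?_, ?_, ?_, ?_⟩
  · -- involution
    rintro ⟨i, j⟩
    have hiv : i.val < a + 2 := ZMod.val_lt i
    by_cases h1 : i.val = 1
    · have hi1 : i = 1 := vinj _ _ (by rw [v1, h1])
      rw [fstep_val1 f h1 j]
      by_cases hc : f (0, j) = (1, j)
      · rw [if_pos hc, fstep_val0 f v0 j, if_pos hc, hi1]
      · rw [if_neg hc, fstep_val2 f v2 j, if_neg hc, hi1]
    by_cases h2 : i.val = 2
    · have hi2 : i = 2 := vinj _ _ (by rw [v2, h2])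
      rw [fstep_val2 f h2 j]
      by_cases hc : f (0, j) = (1, j)
      · rw [if_pos hc, fstep_val3c f v3 hc, hi2]
      · rw [if_neg hc, fstep_val1 f v1 j, if_neg hc, hi2]
    by_cases h0 : i.val = 0
    · have hi0 : i = 0 := vinj _ _ (by rw [v0, h0])
      subst hi0
      by_cases hc : f (0, j) = (1, j)
      · rw [fstep_val0 f v0 j, if_pos hc, fstep_val1 f v1 j, if_pos hc]
      · rw [fstep_val0 f v0 j, if_neg hc]
        have hy := hinv (0, j)
        have c1 : (f (0, j)).1 = 0 → f (0, (f (0, j)).2) ≠ (1, (f (0, j)).2) := by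
          intro hp hcq
          have hyy : f (0, j) = (0, (f (0, j)).2) := Prod.ext hp rfl
          rw [hyy] at hy
          have h' := hy.symm.trans hcq
          exact ne01 (congrArg Prod.fst h')
        have c2 : (f (0, j)).1 = 1 → f (0, (f (0, j)).2) ≠ (1, (f (0, j)).2) := by
          intro hp hcq
          have hyy : f (0, j) = (1, (f (0, j)).2) := Prod.ext hp rfl
          have h10 := hA0 _ hcq
          rw [← hyy] at h10
          rw [hy] at h10
          have hj2 : j = (f (0, j)).2 := congrArg Prod.snd h10
          apply hc
          rw [hj2]
          exact hcq
        have hG2 := G (f (0, j)) c1 c2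
        rw [hG2, hy]
        show ((eup a 0), j) = (0, j)
        rw [eup_zero]
    · have h3 : 3 ≤ i.val := by omega
      by_cases hc3 : i.val = 3 ∧ f (0, j) = (1, j)
      · have hi3 : i = 3 := vinj _ _ (by rw [v3]; exact hc3.1)
        rw [fstep_val3c f hc3.1 hc3.2, fstep_val2 f v2 j, if_pos hc3.2, hi3]
      · have hrval : (((i.val - 2 : ℕ) : ZMod a)).val = i.val - 2 := ZMod.val_cast_of_lt (by omega)
        set r := ((i.val - 2 : ℕ) : ZMod a) with hrdef
        have hr0 : r ≠ 0 := by
          intro h'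
          rw [h', ZMod.val_zero] at hrval
          omega
        have hieq : eup a r = i := eup_back i h3
        have hr1c : r = 1 → ¬f (0, j) = (1, j) := by
          intro hr1 hc
          apply hc3
          refine ⟨?_, hc⟩
          rw [hr1, w1] at hrval
          omega
        have hG := G (r, j) (fun h' => absurd h' hr0) hr1c
        dsimp only at hG
        rw [hieq] at hG
        rw [hG]
        have hy := hinv (r, j)
        have c1 : (f (r, j)).1 = 0 → f (0, (f (r, j)).2) ≠ (1, (f (r, j)).2) := by
          intro hp hcq
          have hyy : f (r, j) = (0, (f (r, j)).2) := Prod.ext hp rfl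
          rw [hyy] at hy
          have h' := hy.symm.trans hcq
          apply hc3
          have hr1 : r = 1 := congrArg Prod.fst h'
          have hj2 : j = (f (r, j)).2 := congrArg Prod.snd h'
          constructor
          · rw [hr1, w1] at hrval
            omega
          · rw [hj2]
            exact hcq
        have c2 : (f (r, j)).1 = 1 → f (0, (f (r, j)).2) ≠ (1, (f (r, j)).2) := by
          intro hp hcq
          have hyy : f (r, j) = (1, (f (r, j)).2) := Prod.ext hp rfl
          have h10 := hA0 _ hcq
          rw [← hyy] at h10
          rw [hy] at h10
          exact hr0 (congrArg Prod.fst h10)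
        have hG2 := G (f (r, j)) c1 c2
        rw [hG2, hy]
        show ((eup a r), j) = (i, j)
        rw [hieq]
  · -- adjacency
    rintro ⟨i, j⟩
    have hiv : i.val < a + 2 := ZMod.val_lt i
    by_cases h1 : i.val = 1
    · have hi1 : i = 1 := vinj _ _ (by rw [v1, h1])
      rw [fstep_val1 f h1 j, hi1]
      split_ifs
      · exact Or.inl ⟨rfl, Or.inr (zero_add 1).symm⟩
      · exact Or.inl ⟨rfl, Or.inl one_add_one_eq_two.symm⟩
    by_cases h2 : i.val = 2
    · have hi2 : i = 2 := vinj _ _ (by rw [v2, h2])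
      rw [fstep_val2 f h2 j, hi2]
      split_ifs
      · exact Or.inl ⟨rfl, Or.inl two_add_one_eq_three.symm⟩
      · exact Or.inl ⟨rfl, Or.inr one_add_one_eq_two.symm⟩
    by_cases h0 : i.val = 0
    · have hi0 : i = 0 := vinj _ _ (by rw [v0, h0])
      subst hi0
      by_cases hc : f (0, j) = (1, j)
      · rw [fstep_val0 f v0 j, if_pos hc]
        exact Or.inl ⟨rfl, Or.inl (zero_add 1).symm⟩
      · rw [fstep_val0 f v0 j, if_neg hc]
        have c1 : ¬((0 : ZMod a) = 0 ∧ (f (0, j)).1 = 1) := by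
          rintro ⟨-, hp⟩
          exact hc (hdet (0, j) 1 hp (Ne.symm ne01))
        have c2 : ¬((0 : ZMod a) = 1 ∧ (f (0, j)).1 = 0) := by
          rintro ⟨h', -⟩
          exact ne01 h'
        have := Gadj (0, j) c1 c2
        dsimp only at this
        rw [eup_zero] at this
        exact this
    · have h3 : 3 ≤ i.val := by omega
      by_cases hc3 : i.val = 3 ∧ f (0, j) = (1, j)
      · have hi3 : i = 3 := vinj _ _ (by rw [v3]; exact hc3.1)
        rw [fstep_val3c f hc3.1 hc3.2, hi3]
        exact Or.inl ⟨rfl, Or.inr two_add_one_eq_three.symm⟩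
      · have hrval : (((i.val - 2 : ℕ) : ZMod a)).val = i.val - 2 := ZMod.val_cast_of_lt (by omega)
        set r := ((i.val - 2 : ℕ) : ZMod a) with hrdef
        have hr0 : r ≠ 0 := by
          intro h'
          rw [h', ZMod.val_zero] at hrval
          omega
        have hieq : eup a r = i := eup_back i h3
        rw [fstep_val_hi f h3 hc3, ← hrdef, ← hieq]
        have c1 : ¬(r = 0 ∧ (f (r, j)).1 = 1) := by
          rintro ⟨h', -⟩
          exact hr0 h'
        have c2 : ¬(r = 1 ∧ (f (r, j)).1 = 0) := by
          rintro ⟨hr1, hp⟩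
          have hyy : f (r, j) = (0, j) := hdet (r, j) 0 hp (fun h' => ne01 (h'.trans hr1))
          have hfz : f (0, j) = (r, j) := by rw [← hyy]; exact hinv (r, j)
          apply hc3
          constructor
          · rw [hr1, w1] at hrval
            omega
          · rw [hfz, hr1]
        have := Gadj (r, j) c1 c2
        dsimp only at this
        exact this
  · -- row faults
    intro i'
    have hiv : i'.val < a + 2 := ZMod.val_lt i'
    by_cases h0 : i'.val = 0
    · have hi0 : i' = 0 := vinj _ _ (by rw [v0, h0])
      obtain ⟨j, hj⟩ := hrow 0
      rw [zero_add] at hj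
      exact ⟨j, by rw [fstep_val0 f h0 j, if_pos hj, hi0, zero_add]⟩
    by_cases h1 : i'.val = 1
    · have hi1 : i' = 1 := vinj _ _ (by rw [v1, h1])
      obtain ⟨j, hj⟩ := hrow 1
      rw [one_add_one_eq_two] at hj
      have hnc : ¬f (0, j) = (1, j) := by
        intro hcj
        have h' := hA0 j hcj
        rw [h'] at hj
        exact ne02 (congrArg Prod.fst hj)
      exact ⟨j, by rw [fstep_val1 f h1 j, if_neg hnc, hi1, one_add_one_eq_two]⟩
    by_cases h2 : i'.val = 2
    · have hi2 : i' = 2 := vinj _ _ (by rw [v2, h2])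
      obtain ⟨j, hj⟩ := hrow 0
      rw [zero_add] at hj
      exact ⟨j, by rw [fstep_val2 f h2 j, if_pos hj, hi2, two_add_one_eq_three]⟩
    · have h3 : 3 ≤ i'.val := by omega
      have hrval : (((i'.val - 2 : ℕ) : ZMod a)).val = i'.val - 2 := ZMod.val_cast_of_lt (by omega)
      set r := ((i'.val - 2 : ℕ) : ZMod a) with hrdef
      have hr0 : r ≠ 0 := by
        intro h'
        rw [h', ZMod.val_zero] at hrval
        omega
      have hieq : eup a r = i' := eup_back i' h3
      obtain ⟨j, hj⟩ := hrow r
      have c2 : r = 1 → ¬f (0, j) = (1, j) := by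
        intro hr1 hcj
        have h' := hA0 j hcj
        rw [hr1] at hj
        rw [h'] at hj
        have := congrArg Prod.fst hj
        rw [one_add_one_eq_two] at this
        exact ne02 this
      have hG := G (r, j) (fun h' => absurd h' hr0) c2
      dsimp only at hG
      refine ⟨j, ?_⟩
      rw [← hieq, hG, hj]
      show ((eup a (r + 1)), j) = (eup a r + 1, j)
      rw [eup_succ ha r hr0]
  · -- column faults
    intro j
    obtain ⟨i, hi⟩ := hcol j
    have c1 : i = 0 → ¬f (0, j) = (1, j) := by
      rintro rfl hcj
      exact ne01 (congrArg Prod.fst (hcj.symm.trans hi)).symm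
    have c2 : i = 1 → ¬f (0, j) = (1, j) := by
      rintro rfl hcj
      have h' := hA0 j hcj
      exact ne01 (congrArg Prod.fst (h'.symm.trans hi))
    have hG := G (i, j) c1 c2
    dsimp only at hG
    refine ⟨eup a i, ?_⟩
    rw [hG, hi]

theorem tileable_of_goodMatch {a b : ℕ} {f : ZMod a × ZMod b → ZMod a × ZMod b}
    (h : GoodMatch a b f) : torFaultFreeTileable a b := by
  obtain ⟨hinv, hadj, hrow, hcol⟩ := h
  refine ⟨{p | ∃ x, p = s(x, f x)}, ⟨?_, ?_⟩, ?_, ?_⟩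
  · rintro p ⟨x, rfl⟩
    exact ⟨x, f x, hadj x, rfl⟩
  · intro x
    refine ⟨s(x, f x), ⟨⟨x, rfl⟩, by simp⟩, ?_⟩
    rintro p ⟨⟨y, rfl⟩, hx⟩
    rw [Sym2.mem_iff] at hx
    rcases hx with rfl | rfl
    · rfl
    · rw [hinv y]
      exact Sym2.eq_swap
  · intro i
    obtain ⟨j, hj⟩ := hrow i
    exact ⟨j, ⟨(i, j), by rw [hj]⟩⟩
  · intro j
    obtain ⟨i, hi⟩ := hcol j
    exact ⟨i, ⟨(i, j), by rw [hi]⟩⟩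


theorem GM.swap {a b : ℕ} (h : GM a b) : GM b a := by
  obtain ⟨f, hinv, hadj, hrow, hcol⟩ := h
  refine ⟨fun x => ((f (x.2, x.1)).2, (f (x.2, x.1)).1), ?_, ?_, ?_, ?_⟩
  · intro x
    simp only [hinv (x.2, x.1)]
  · intro x
    have := hadj (x.2, x.1)
    unfold torAdj at this ⊢
    dsimp only at this ⊢
    tauto
  · intro i
    obtain ⟨j, hj⟩ := hcol i
    exact ⟨j, by simp [hj]⟩
  · intro j
    obtain ⟨i, hi⟩ := hrow j
    exact ⟨i, by simp [hi]⟩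


def f87 : ZMod 8 × ZMod 7 → ZMod 8 × ZMod 7 := fun x =>
  match x.1.val, x.2.val with
  | 0, 0 => (1, 0)
  | 0, 1 => (1, 1)
  | 0, 2 => (1, 2)
  | 0, 3 => (1, 3)
  | 0, 4 => (7, 4)
  | 0, 5 => (0, 6)
  | 0, 6 => (0, 5)
  | 1, 0 => (0, 0)
  | 1, 1 => (0, 1)
  | 1, 2 => (0, 2)
  | 1, 3 => (0, 3)
  | 1, 4 => (2, 4)
  | 1, 5 => (1, 6)
  | 1, 6 => (1, 5)
  | 2, 0 => (2, 1)
  | 2, 1 => (2, 0)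
  | 2, 2 => (2, 3)
  | 2, 3 => (2, 2)
  | 2, 4 => (1, 4)
  | 2, 5 => (3, 5)
  | 2, 6 => (3, 6)
  | 3, 0 => (4, 0)
  | 3, 1 => (3, 2)
  | 3, 2 => (3, 1)
  | 3, 3 => (3, 4)
  | 3, 4 => (3, 3)
  | 3, 5 => (2, 5)
  | 3, 6 => (2, 6)
  | 4, 0 => (3, 0)
  | 4, 1 => (4, 2)
  | 4, 2 => (4, 1)
  | 4, 3 => (5, 3)
  | 4, 4 => (4, 5)
  | 4, 5 => (4, 4)
  | 4, 6 => (5, 6)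
  | 5, 0 => (5, 1)
  | 5, 1 => (5, 0)
  | 5, 2 => (6, 2)
  | 5, 3 => (4, 3)
  | 5, 4 => (5, 5)
  | 5, 5 => (5, 4)
  | 5, 6 => (4, 6)
  | 6, 0 => (6, 6)
  | 6, 1 => (7, 1)
  | 6, 2 => (5, 2)
  | 6, 3 => (6, 4)
  | 6, 4 => (6, 3)
  | 6, 5 => (7, 5)
  | 6, 6 => (6, 0)
  | 7, 0 => (7, 6)
  | 7, 1 => (6, 1)
  | 7, 2 => (7, 3)
  | 7, 3 => (7, 2)
  | 7, 4 => (0, 4)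
  | 7, 5 => (6, 5)
  | 7, 6 => (7, 0)
  | _, _ => (0, 0)

lemma gm8_7 : GM 8 7 := ⟨f87, by unfold GoodMatch; decide⟩

def f69 : ZMod 6 × ZMod 9 → ZMod 6 × ZMod 9 := fun x =>
  match x.1.val, x.2.val with
  | 0, 0 => (1, 0)
  | 0, 1 => (1, 1)
  | 0, 2 => (5, 2)
  | 0, 3 => (0, 4)
  | 0, 4 => (0, 3)
  | 0, 5 => (0, 6)
  | 0, 6 => (0, 5)
  | 0, 7 => (0, 8)
  | 0, 8 => (0, 7)
  | 1, 0 => (0, 0)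
  | 1, 1 => (0, 1)
  | 1, 2 => (1, 3)
  | 1, 3 => (1, 2)
  | 1, 4 => (1, 5)
  | 1, 5 => (1, 4)
  | 1, 6 => (2, 6)
  | 1, 7 => (1, 8)
  | 1, 8 => (1, 7)
  | 2, 0 => (2, 8)
  | 2, 1 => (2, 2)
  | 2, 2 => (2, 1)
  | 2, 3 => (3, 3)
  | 2, 4 => (2, 5)
  | 2, 5 => (2, 4)
  | 2, 6 => (1, 6)
  | 2, 7 => (3, 7)
  | 2, 8 => (2, 0)
  | 3, 0 => (3, 8)
  | 3, 1 => (3, 2)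
  | 3, 2 => (3, 1)
  | 3, 3 => (2, 3)
  | 3, 4 => (4, 4)
  | 3, 5 => (3, 6)
  | 3, 6 => (3, 5)
  | 3, 7 => (2, 7)
  | 3, 8 => (3, 0)
  | 4, 0 => (4, 1)
  | 4, 1 => (4, 0)
  | 4, 2 => (4, 3)
  | 4, 3 => (4, 2)
  | 4, 4 => (3, 4)
  | 4, 5 => (5, 5)
  | 4, 6 => (4, 7)
  | 4, 7 => (4, 6)
  | 4, 8 => (5, 8)
  | 5, 0 => (5, 1)
  | 5, 1 => (5, 0)
  | 5, 2 => (0, 2)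
  | 5, 3 => (5, 4)
  | 5, 4 => (5, 3)
  | 5, 5 => (4, 5)
  | 5, 6 => (5, 7)
  | 5, 7 => (5, 6)
  | 5, 8 => (4, 8)
  | _, _ => (0, 0)

lemma gm6_9 : GM 6 9 := ⟨f69, by unfold GoodMatch; decide⟩

def f105 : ZMod 10 × ZMod 5 → ZMod 10 × ZMod 5 := fun x =>
  match x.1.val, x.2.val with
  | 0, 0 => (1, 0)
  | 0, 1 => (1, 1)
  | 0, 2 => (9, 2)
  | 0, 3 => (0, 4)
  | 0, 4 => (0, 3)
  | 1, 0 => (0, 0)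
  | 1, 1 => (0, 1)
  | 1, 2 => (2, 2)
  | 1, 3 => (1, 4)
  | 1, 4 => (1, 3)
  | 2, 0 => (2, 1)
  | 2, 1 => (2, 0)
  | 2, 2 => (1, 2)
  | 2, 3 => (3, 3)
  | 2, 4 => (3, 4)
  | 3, 0 => (4, 0)
  | 3, 1 => (3, 2)
  | 3, 2 => (3, 1)
  | 3, 3 => (2, 3)
  | 3, 4 => (2, 4)
  | 4, 0 => (3, 0)
  | 4, 1 => (5, 1)
  | 4, 2 => (4, 3)
  | 4, 3 => (4, 2)
  | 4, 4 => (5, 4)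
  | 5, 0 => (6, 0)
  | 5, 1 => (4, 1)
  | 5, 2 => (5, 3)
  | 5, 3 => (5, 2)
  | 5, 4 => (4, 4)
  | 6, 0 => (5, 0)
  | 6, 1 => (6, 2)
  | 6, 2 => (6, 1)
  | 6, 3 => (7, 3)
  | 6, 4 => (7, 4)
  | 7, 0 => (7, 1)
  | 7, 1 => (7, 0)
  | 7, 2 => (8, 2)
  | 7, 3 => (6, 3)
  | 7, 4 => (6, 4)
  | 8, 0 => (8, 4)
  | 8, 1 => (9, 1)
  | 8, 2 => (7, 2)
  | 8, 3 => (9, 3)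
  | 8, 4 => (8, 0)
  | 9, 0 => (9, 4)
  | 9, 1 => (8, 1)
  | 9, 2 => (0, 2)
  | 9, 3 => (8, 3)
  | 9, 4 => (9, 0)
  | _, _ => (0, 0)

lemma gm10_5 : GM 10 5 := ⟨f105, by unfold GoodMatch; decide⟩


lemma GM.grow {a b : ℕ} (ha : 3 ≤ a) (hb : 2 ≤ b) (h : GM a b) : ∀ n, GM (a + 2 * n) b := by
  intro n
  induction n with
  | zero => simpa using h
  | succ k ih =>
    have he : a + 2 * (k + 1) = (a + 2 * k) + 2 := by ring
    rw [he]
    exact GM.step (by omega) hb ih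

lemma GM.tileable {a b : ℕ} (h : GM a b) : torFaultFreeTileable a b := by
  obtain ⟨f, hf⟩ := h
  exact tileable_of_goodMatch hf

/-- For all natural numbers `n` and `m`, each of the torus boards
`(8+2n)′ × (7+2m)′`, `(9+2n)′ × (6+2m)′`, and `(10+2n)′ × (5+2m)′` admits a
fault-free domino tiling. -/
theorem tor_faultFree_families :
    ∀ n m : ℕ,
      torFaultFreeTileable (8 + 2 * n) (7 + 2 * m) ∧
      torFaultFreeTileable (9 + 2 * n) (6 + 2 * m) ∧
      torFaultFreeTileable (10 + 2 * n) (5 + 2 * m) := by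
  intro n m
  refine ⟨?_, ?_, ?_⟩
  · exact ((((gm8_7.grow (by omega) (by omega) n).swap).grow (by omega)
      (by omega) m).swap).tileable
  · exact (((gm6_9.grow (by omega) (by omega) m).swap).grow (by omega)
      (by omega) n).tileable
  · exact ((((gm10_5.grow (by omega) (by omega) n).swap).grow (by omega)
      (by omega) m).swap).tileable
end

section
/- None of the torus boards 6′×5′, 8′×5′, and 7′×6′ admits a fault-free domino tiling. -/
namespace TorAux

/-- A finset carrying a fixed-point-free involution has even cardinality. -/
lemma even_card_invol {α : Type*} [DecidableEq α] (g : α → α) :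
    ∀ s : Finset α, (∀ x ∈ s, g x ∈ s) → (∀ x ∈ s, g (g x) = x) → (∀ x ∈ s, g x ≠ x) →
      Even s.card := by
  intro s
  induction s using Finset.strongInduction with
  | _ s ih =>
    intro hmem hinv hne
    rcases s.eq_empty_or_nonempty with rfl | ⟨x, hx⟩
    · simp
    · have hgx : g x ∈ s := hmem x hx
      have hxgx : x ≠ g x := fun h => hne x hx h.symm
      have hsub : {x, g x} ⊆ s := by
        intro y hy
        rcases Finset.mem_insert.mp hy with rfl | hy
        · exact hx
        · rw [Finset.mem_singleton] at hy; subst hy; exact hgx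
      have hpair : ({x, g x} : Finset α).card = 2 := Finset.card_pair hxgx
      have hss : s \ {x, g x} ⊂ s :=
        Finset.sdiff_ssubset hsub ⟨x, Finset.mem_insert_self _ _⟩
      have hmemt : ∀ y ∈ s \ {x, g x}, g y ∈ s \ {x, g x} := by
        intro y hy
        rw [Finset.mem_sdiff] at hy ⊢
        obtain ⟨hys, hyn⟩ := hy
        simp only [Finset.mem_insert, Finset.mem_singleton] at hyn ⊢
        push_neg at hyn ⊢
        refine ⟨hmem y hys, ?_, ?_⟩
        · intro h
          exact hyn.2 (by rw [← hinv y hys, h])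
        · intro h
          exact hyn.1 (by rw [← hinv y hys, h, hinv x hx])
      have h2le : 2 ≤ s.card := by
        have := Finset.card_le_card hsub
        omega
      have heq : s.card = (s \ {x, g x}).card + 2 := by
        rw [Finset.card_sdiff_of_subset hsub, hpair]
        omega
      obtain ⟨k, hk⟩ := ih _ hss hmemt
        (fun y hy => hinv y (Finset.mem_sdiff.mp hy).1)
        (fun y hy => hne y (Finset.mem_sdiff.mp hy).1)
      exact ⟨k + 1, by omega⟩

lemma zmod_add_ne {n k : ℕ} (hk : 0 < k) (hn : k < n) (x : ZMod n) :
    x + (k : ZMod n) ≠ x := by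
  haveI : NeZero n := ⟨by omega⟩
  intro h
  have h1 : ((k : ℕ) : ZMod n) = 0 := by rwa [add_eq_left] at h
  rw [ZMod.natCast_eq_zero_iff] at h1
  exact absurd (Nat.le_of_dvd hk h1) (by omega)

lemma zmod_one_ne {n : ℕ} (hn : 3 ≤ n) (x : ZMod n) : x + 1 ≠ x := by
  have := zmod_add_ne (n := n) (k := 1) one_pos (by omega) x
  rwa [Nat.cast_one] at this

lemma zmod_two_ne {n : ℕ} (hn : 3 ≤ n) (x : ZMod n) : x + 1 + 1 ≠ x := by
  have := zmod_add_ne (n := n) (k := 2) (by norm_num) (by omega) x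
  have h2 : ((2 : ℕ) : ZMod n) = 1 + 1 := by push_cast; ring
  rw [h2, ← add_assoc] at this
  exact this

lemma torAdj_symm {a b : ℕ} {c d : ZMod a × ZMod b} (h : torAdj a b c d) :
    torAdj a b d c := by
  rcases h with ⟨h1, h2⟩ | ⟨h1, h2⟩
  · exact Or.inl ⟨h1.symm, h2.symm⟩
  · exact Or.inr ⟨h1.symm, h2.symm⟩

lemma torAdj_swap {a b : ℕ} {c d : ZMod a × ZMod b} (h : torAdj a b c d) :
    torAdj b a (c.2, c.1) (d.2, d.1) := by
  rcases h with ⟨h1, h2⟩ | ⟨h1, h2⟩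
  · exact Or.inr ⟨h1, h2⟩
  · exact Or.inl ⟨h1, h2⟩

/-- The three kinds of cells in row `i+1`: matched upward (crossing line `i`),
matched downward (crossing line `i+1`), matched horizontally; they partition
the row. -/
lemma row_lemma {a b : ℕ} [NeZero a] [NeZero b] (ha : 3 ≤ a) (hb : 3 ≤ b)
    (f : ZMod a × ZMod b → ZMod a × ZMod b)
    (hadj : ∀ x, torAdj a b x (f x))
    (hinv : ∀ x, f (f x) = x) (i : ZMod a) :
    (Finset.univ.filter fun j : ZMod b => f (i, j) = (i + 1, j)).card +
      (Finset.univ.filter fun j : ZMod b => f (i + 1, j) = (i + 1 + 1, j)).card +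
      (Finset.univ.filter fun j : ZMod b => (f (i + 1, j)).1 = i + 1).card = b := by
  classical
  set A := Finset.univ.filter fun j : ZMod b => f (i + 1, j) = (i, j) with hA
  set A' := Finset.univ.filter fun j : ZMod b => f (i, j) = (i + 1, j) with hA'
  set B := Finset.univ.filter fun j : ZMod b => f (i + 1, j) = (i + 1 + 1, j) with hB
  set C := Finset.univ.filter fun j : ZMod b => (f (i + 1, j)).1 = i + 1 with hC
  have hAA' : A = A' := by
    ext j
    simp only [hA, hA', Finset.mem_filter, Finset.mem_univ, true_and]
    constructor
    · intro h
      have := congrArg f h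
      rw [hinv] at this
      exact this.symm
    · intro h
      have := congrArg f h
      rw [hinv] at this
      exact this.symm
  have hdAB : Disjoint A B := by
    rw [Finset.disjoint_left]
    intro j hj hj'
    simp only [hA, hB, Finset.mem_filter, Finset.mem_univ, true_and] at hj hj'
    have h1 : i + 1 + 1 = i := congrArg Prod.fst (hj'.symm.trans hj)
    exact zmod_two_ne ha i h1
  have hdAC : Disjoint A C := by
    rw [Finset.disjoint_left]
    intro j hj hj'
    simp only [hA, hC, Finset.mem_filter, Finset.mem_univ, true_and] at hj hj'
    rw [hj] at hj'
    exact zmod_one_ne ha i hj'.symm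
  have hdBC : Disjoint B C := by
    rw [Finset.disjoint_left]
    intro j hj hj'
    simp only [hB, hC, Finset.mem_filter, Finset.mem_univ, true_and] at hj hj'
    rw [hj] at hj'
    exact zmod_one_ne ha (i + 1) hj'
  have hcover : A ∪ B ∪ C = Finset.univ := by
    ext j
    simp only [Finset.mem_union, hA, hB, hC, Finset.mem_filter, Finset.mem_univ,
      true_and, iff_true]
    rcases hadj (i + 1, j) with ⟨h1, h2 | h2⟩ | ⟨h1, _⟩
    · exact Or.inl (Or.inr (Prod.ext_iff.mpr ⟨h2, h1.symm⟩))
    · have h3 : (f (i + 1, j)).1 = i := (add_right_cancel h2).symm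
      exact Or.inl (Or.inl (Prod.ext_iff.mpr ⟨h3, h1.symm⟩))
    · exact Or.inr h1.symm
  have hd2 : Disjoint (A ∪ B) C := Finset.disjoint_union_left.mpr ⟨hdAC, hdBC⟩
  have hkey : A.card + B.card + C.card = b := by
    rw [← Finset.card_union_of_disjoint hdAB, ← Finset.card_union_of_disjoint hd2,
      hcover, Finset.card_univ, ZMod.card]
  rwa [hAA'] at hkey

lemma row_even {a b : ℕ} [NeZero a] [NeZero b]
    (f : ZMod a × ZMod b → ZMod a × ZMod b)
    (hinv : ∀ x, f (f x) = x) (hfne : ∀ x, f x ≠ x) (r : ZMod a) :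
    Even (Finset.univ.filter fun j : ZMod b => (f (r, j)).1 = r).card := by
  classical
  apply even_card_invol (fun j => (f (r, j)).2)
  · intro j hj
    simp only [Finset.mem_filter, Finset.mem_univ, true_and] at hj ⊢
    have hy : f (r, j) = (r, (f (r, j)).2) := Prod.ext_iff.mpr ⟨hj, rfl⟩
    rw [← hy, hinv]
  · intro j hj
    simp only [Finset.mem_filter, Finset.mem_univ, true_and] at hj
    have hy : f (r, j) = (r, (f (r, j)).2) := Prod.ext_iff.mpr ⟨hj, rfl⟩
    show (f (r, (f (r, j)).2)).2 = j
    rw [← hy, hinv]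
  · intro j hj
    simp only [Finset.mem_filter, Finset.mem_univ, true_and] at hj
    intro h
    exact hfne (r, j) (Prod.ext_iff.mpr ⟨hj, h⟩)

lemma col_even {a b : ℕ} [NeZero a] [NeZero b]
    (f : ZMod a × ZMod b → ZMod a × ZMod b)
    (hinv : ∀ x, f (f x) = x) (hfne : ∀ x, f x ≠ x) (s : ZMod b) :
    Even (Finset.univ.filter fun i : ZMod a => (f (i, s)).2 = s).card := by
  classical
  apply even_card_invol (fun i => (f (i, s)).1)
  · intro i hi
    simp only [Finset.mem_filter, Finset.mem_univ, true_and] at hi ⊢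
    have hy : f (i, s) = ((f (i, s)).1, s) := Prod.ext_iff.mpr ⟨rfl, hi⟩
    rw [← hy, hinv]
  · intro i hi
    simp only [Finset.mem_filter, Finset.mem_univ, true_and] at hi
    have hy : f (i, s) = ((f (i, s)).1, s) := Prod.ext_iff.mpr ⟨rfl, hi⟩
    show (f ((f (i, s)).1, s)).1 = i
    rw [← hy, hinv]
  · intro i hi
    simp only [Finset.mem_filter, Finset.mem_univ, true_and] at hi
    intro h
    exact hfne (i, s) (Prod.ext_iff.mpr ⟨h, hi⟩)

/-- The column version of `row_lemma`, obtained by transposition. -/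
lemma col_lemma {a b : ℕ} [NeZero a] [NeZero b] (ha : 3 ≤ a) (hb : 3 ≤ b)
    (f : ZMod a × ZMod b → ZMod a × ZMod b)
    (hadj : ∀ x, torAdj a b x (f x))
    (hinv : ∀ x, f (f x) = x) (j : ZMod b) :
    (Finset.univ.filter fun i : ZMod a => f (i, j) = (i, j + 1)).card +
      (Finset.univ.filter fun i : ZMod a => f (i, j + 1) = (i, j + 1 + 1)).card +
      (Finset.univ.filter fun i : ZMod a => (f (i, j + 1)).2 = j + 1).card = a := by
  classical
  set g : ZMod b × ZMod a → ZMod b × ZMod a :=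
    fun y => ((f (y.2, y.1)).2, (f (y.2, y.1)).1) with hg
  have hadj_g : ∀ y, torAdj b a y (g y) := by
    intro y
    have := torAdj_swap (hadj (y.2, y.1))
    simpa [hg] using this
  have hinv_g : ∀ y, g (g y) = y := by
    intro y
    simp only [hg]
    rw [Prod.mk.eta, hinv]
  have h1 := row_lemma hb ha g hadj_g hinv_g j
  have e1 : (Finset.univ.filter fun i : ZMod a => g (j, i) = (j + 1, i)) =
      (Finset.univ.filter fun i : ZMod a => f (i, j) = (i, j + 1)) := by
    ext i
    simp only [Finset.mem_filter, Finset.mem_univ, true_and, hg, Prod.mk.injEq,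
      Prod.ext_iff]
    tauto
  have e2 : (Finset.univ.filter fun i : ZMod a => g (j + 1, i) = (j + 1 + 1, i)) =
      (Finset.univ.filter fun i : ZMod a => f (i, j + 1) = (i, j + 1 + 1)) := by
    ext i
    simp only [Finset.mem_filter, Finset.mem_univ, true_and, hg, Prod.mk.injEq,
      Prod.ext_iff]
    tauto
  have e3 : (Finset.univ.filter fun i : ZMod a => (g (j + 1, i)).1 = j + 1) =
      (Finset.univ.filter fun i : ZMod a => (f (i, j + 1)).2 = j + 1) := by
    ext i
    simp only [Finset.mem_filter, Finset.mem_univ, true_and, hg]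
  rwa [e1, e2, e3] at h1

lemma tor_counts {a b : ℕ} [NeZero a] [NeZero b] (ha : 3 ≤ a) (hb : 3 ≤ b)
    (h : torFaultFreeTileable a b) :
    ∃ (c : ZMod a → ℕ) (d : ZMod b → ℕ),
      (∀ i, 1 ≤ c i) ∧ (∀ j, 1 ≤ d j) ∧
      (∀ i, ∃ m, c i + c (i + 1) + 2 * m = b) ∧
      (∀ j, ∃ m, d j + d (j + 1) + 2 * m = a) ∧
      2 * (∑ i, c i) + 2 * (∑ j, d j) = a * b := by
  classical
  obtain ⟨T, hT, hF⟩ := h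
  -- construct the partner function
  have hex : ∀ x : ZMod a × ZMod b,
      ∃ y, torAdj a b x y ∧ s(x, y) ∈ T ∧ ∀ z, s(x, z) ∈ T → z = y := by
    intro x
    obtain ⟨p, ⟨hpT, hxp⟩, hun⟩ := hT.2 x
    obtain ⟨u, v, huv, rfl⟩ := hT.1 p hpT
    rw [Sym2.mem_iff] at hxp
    rcases hxp with rfl | rfl
    · refine ⟨v, huv, hpT, fun z hz => ?_⟩
      have := hun s(x, z) ⟨hz, Sym2.mem_mk_left x z⟩
      exact Sym2.congr_right.mp this
    · refine ⟨u, torAdj_symm huv, by rwa [Sym2.eq_swap], fun z hz => ?_⟩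
      have := hun s(x, z) ⟨hz, Sym2.mem_mk_left x z⟩
      rw [Sym2.eq_swap (a := u) (b := x)] at this
      exact Sym2.congr_right.mp this
  choose f hadj hmem huniq using hex
  have hfne : ∀ x, f x ≠ x := by
    intro x h
    have hx := hadj x
    rw [h] at hx
    rcases hx with ⟨-, h2 | h2⟩ | ⟨-, h2 | h2⟩
    · exact zmod_one_ne ha x.1 h2.symm
    · exact zmod_one_ne ha x.1 h2.symm
    · exact zmod_one_ne hb x.2 h2.symm
    · exact zmod_one_ne hb x.2 h2.symm
  have hinv : ∀ x, f (f x) = x := by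
    intro x
    have h : s(f x, x) ∈ T := by rw [Sym2.eq_swap]; exact hmem x
    exact (huniq (f x) x h).symm
  have hmemiff : ∀ x y, s(x, y) ∈ T ↔ f x = y :=
    fun x y => ⟨fun h => (huniq x y h).symm, fun h => h ▸ hmem x⟩
  refine ⟨fun i => (Finset.univ.filter fun j : ZMod b => f (i, j) = (i + 1, j)).card,
          fun j => (Finset.univ.filter fun i : ZMod a => f (i, j) = (i, j + 1)).card,
          ?_, ?_, ?_, ?_, ?_⟩
  · intro i
    obtain ⟨j, hj⟩ := hF.1 i
    rw [hmemiff] at hj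
    exact Finset.card_pos.mpr ⟨j, Finset.mem_filter.mpr ⟨Finset.mem_univ j, hj⟩⟩
  · intro j
    obtain ⟨i, hi⟩ := hF.2 j
    rw [hmemiff] at hi
    exact Finset.card_pos.mpr ⟨i, Finset.mem_filter.mpr ⟨Finset.mem_univ i, hi⟩⟩
  · intro i
    have h1 := row_lemma ha hb f hadj hinv i
    obtain ⟨m, hm⟩ := row_even f hinv hfne (i + 1)
    refine ⟨m, ?_⟩
    show (Finset.univ.filter fun j : ZMod b => f (i, j) = (i + 1, j)).card +
        (Finset.univ.filter fun j : ZMod b => f (i + 1, j) = (i + 1 + 1, j)).card +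
        2 * m = b
    omega
  · intro j
    have h1 := col_lemma ha hb f hadj hinv j
    obtain ⟨m, hm⟩ := col_even f hinv hfne (j + 1)
    refine ⟨m, ?_⟩
    show (Finset.univ.filter fun i : ZMod a => f (i, j) = (i, j + 1)).card +
        (Finset.univ.filter fun i : ZMod a => f (i, j + 1) = (i, j + 1 + 1)).card +
        2 * m = a
    omega
  · show 2 * (∑ i : ZMod a,
        (Finset.univ.filter fun j : ZMod b => f (i, j) = (i + 1, j)).card) +
      2 * (∑ j : ZMod b,
        (Finset.univ.filter fun i : ZMod a => f (i, j) = (i, j + 1)).card) = a * b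
    -- row sums
    have hsum1 : (∑ i : ZMod a,
        ((Finset.univ.filter fun j : ZMod b => f (i, j) = (i + 1, j)).card +
          (Finset.univ.filter fun j : ZMod b => f (i + 1, j) = (i + 1 + 1, j)).card +
          (Finset.univ.filter fun j : ZMod b => (f (i + 1, j)).1 = i + 1).card)) = a * b := by
      calc (∑ i : ZMod a,
          ((Finset.univ.filter fun j : ZMod b => f (i, j) = (i + 1, j)).card +
            (Finset.univ.filter fun j : ZMod b => f (i + 1, j) = (i + 1 + 1, j)).card +
            (Finset.univ.filter fun j : ZMod b => (f (i + 1, j)).1 = i + 1).card))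
          = ∑ _i : ZMod a, b :=
            Finset.sum_congr rfl fun i _ => row_lemma ha hb f hadj hinv i
        _ = a * b := by
            rw [Finset.sum_const, Finset.card_univ, ZMod.card, smul_eq_mul]
    rw [Finset.sum_add_distrib, Finset.sum_add_distrib] at hsum1
    have r1 : (∑ i : ZMod a,
        (Finset.univ.filter fun j : ZMod b => f (i + 1, j) = (i + 1 + 1, j)).card)
        = ∑ i : ZMod a,
          (Finset.univ.filter fun j : ZMod b => f (i, j) = (i + 1, j)).card :=
      Fintype.sum_equiv (Equiv.addRight (1 : ZMod a)) _ _ (fun i => rfl)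
    have r2 : (∑ i : ZMod a,
        (Finset.univ.filter fun j : ZMod b => (f (i + 1, j)).1 = i + 1).card)
        = ∑ r : ZMod a,
          (Finset.univ.filter fun j : ZMod b => (f (r, j)).1 = r).card :=
      Fintype.sum_equiv (Equiv.addRight (1 : ZMod a)) _ _ (fun i => rfl)
    rw [r1, r2] at hsum1
    -- column sums
    have hsum2 : (∑ j : ZMod b,
        ((Finset.univ.filter fun i : ZMod a => f (i, j) = (i, j + 1)).card +
          (Finset.univ.filter fun i : ZMod a => f (i, j + 1) = (i, j + 1 + 1)).card +
          (Finset.univ.filter fun i : ZMod a => (f (i, j + 1)).2 = j + 1).card)) = b * a := by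
      calc (∑ j : ZMod b,
          ((Finset.univ.filter fun i : ZMod a => f (i, j) = (i, j + 1)).card +
            (Finset.univ.filter fun i : ZMod a => f (i, j + 1) = (i, j + 1 + 1)).card +
            (Finset.univ.filter fun i : ZMod a => (f (i, j + 1)).2 = j + 1).card))
          = ∑ _j : ZMod b, a :=
            Finset.sum_congr rfl fun j _ => col_lemma ha hb f hadj hinv j
        _ = b * a := by
            rw [Finset.sum_const, Finset.card_univ, ZMod.card, smul_eq_mul]
    rw [Finset.sum_add_distrib, Finset.sum_add_distrib] at hsum2
    have r3 : (∑ j : ZMod b,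
        (Finset.univ.filter fun i : ZMod a => f (i, j + 1) = (i, j + 1 + 1)).card)
        = ∑ j : ZMod b,
          (Finset.univ.filter fun i : ZMod a => f (i, j) = (i, j + 1)).card :=
      Fintype.sum_equiv (Equiv.addRight (1 : ZMod b)) _ _ (fun j => rfl)
    have r4 : (∑ j : ZMod b,
        (Finset.univ.filter fun i : ZMod a => (f (i, j + 1)).2 = j + 1).card)
        = ∑ s : ZMod b,
          (Finset.univ.filter fun i : ZMod a => (f (i, s)).2 = s).card :=
      Fintype.sum_equiv (Equiv.addRight (1 : ZMod b)) _ _ (fun j => rfl)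
    rw [r3, r4] at hsum2
    -- the horizontal and vertical cells together fill the board
    have hcompl : ∀ r : ZMod a,
        (Finset.univ.filter fun j : ZMod b => (f (r, j)).1 = r).card +
          (Finset.univ.filter fun j : ZMod b => (f (r, j)).2 = j).card = b := by
      intro r
      have hneg : (Finset.univ.filter fun j : ZMod b => ¬ (f (r, j)).1 = r)
          = (Finset.univ.filter fun j : ZMod b => (f (r, j)).2 = j) := by
        ext j
        simp only [Finset.mem_filter, Finset.mem_univ, true_and]
        constructor
        · intro hnot
          rcases hadj (r, j) with ⟨h1, -⟩ | ⟨h1, -⟩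
          · exact h1.symm
          · exact absurd h1.symm hnot
        · intro h h'
          exact hfne (r, j) (Prod.ext_iff.mpr ⟨h', h⟩)
      have := Finset.card_filter_add_card_filter_not
        (s := (Finset.univ : Finset (ZMod b)))
        (p := fun j : ZMod b => (f (r, j)).1 = r)
      rw [hneg] at this
      rwa [Finset.card_univ, ZMod.card] at this
    have hswap : (∑ r : ZMod a,
        (Finset.univ.filter fun j : ZMod b => (f (r, j)).2 = j).card)
        = ∑ s : ZMod b,
          (Finset.univ.filter fun i : ZMod a => (f (i, s)).2 = s).card := by
      simp only [Finset.card_filter]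
      exact Finset.sum_comm
    have hcross : (∑ r : ZMod a,
        (Finset.univ.filter fun j : ZMod b => (f (r, j)).1 = r).card)
        + (∑ s : ZMod b,
          (Finset.univ.filter fun i : ZMod a => (f (i, s)).2 = s).card) = a * b := by
      rw [← hswap, ← Finset.sum_add_distrib]
      calc (∑ r : ZMod a,
          ((Finset.univ.filter fun j : ZMod b => (f (r, j)).1 = r).card +
            (Finset.univ.filter fun j : ZMod b => (f (r, j)).2 = j).card))
          = ∑ _r : ZMod a, b := Finset.sum_congr rfl fun r _ => hcompl r
        _ = a * b := by
            rw [Finset.sum_const, Finset.card_univ, ZMod.card, smul_eq_mul]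
    have hmul : b * a = a * b := Nat.mul_comm b a
    omega

lemma arith65 (C0 C1 C2 C3 C4 C5 D0 D1 D2 D3 D4 m0 m1 m2 m3 m4 m5 n0 n1 n2 n3 n4 : ℕ)
    (hc0 : 1 ≤ C0) (hc1 : 1 ≤ C1) (hc2 : 1 ≤ C2) (hc3 : 1 ≤ C3) (hc4 : 1 ≤ C4) (hc5 : 1 ≤ C5)
    (hd0 : 1 ≤ D0) (hd1 : 1 ≤ D1) (hd2 : 1 ≤ D2) (hd3 : 1 ≤ D3) (hd4 : 1 ≤ D4)
    (h0 : C0 + C1 + 2 * m0 = 5) (h1 : C1 + C2 + 2 * m1 = 5) (h2 : C2 + C3 + 2 * m2 = 5)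
    (h3 : C3 + C4 + 2 * m3 = 5) (h4 : C4 + C5 + 2 * m4 = 5) (h5 : C5 + C0 + 2 * m5 = 5)
    (g0 : D0 + D1 + 2 * n0 = 6) (g1 : D1 + D2 + 2 * n1 = 6) (g2 : D2 + D3 + 2 * n2 = 6)
    (g3 : D3 + D4 + 2 * n3 = 6) (g4 : D4 + D0 + 2 * n4 = 6)
    (ht : 2 * (C0 + C1 + C2 + C3 + C4 + C5) + 2 * (D0 + D1 + D2 + D3 + D4) = 6 * 5) : False := by
  omega
lemma arith85 (C0 C1 C2 C3 C4 C5 C6 C7 D0 D1 D2 D3 D4 m0 m1 m2 m3 m4 m5 m6 m7 n0 n1 n2 n3 n4 : ℕ)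
    (hc0 : 1 ≤ C0) (hc1 : 1 ≤ C1) (hc2 : 1 ≤ C2) (hc3 : 1 ≤ C3) (hc4 : 1 ≤ C4) (hc5 : 1 ≤ C5)
    (hc6 : 1 ≤ C6) (hc7 : 1 ≤ C7)
    (hd0 : 1 ≤ D0) (hd1 : 1 ≤ D1) (hd2 : 1 ≤ D2) (hd3 : 1 ≤ D3) (hd4 : 1 ≤ D4)
    (h0 : C0 + C1 + 2 * m0 = 5) (h1 : C1 + C2 + 2 * m1 = 5) (h2 : C2 + C3 + 2 * m2 = 5)
    (h3 : C3 + C4 + 2 * m3 = 5) (h4 : C4 + C5 + 2 * m4 = 5) (h5 : C5 + C6 + 2 * m5 = 5)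
    (h6 : C6 + C7 + 2 * m6 = 5) (h7 : C7 + C0 + 2 * m7 = 5)
    (g0 : D0 + D1 + 2 * n0 = 8) (g1 : D1 + D2 + 2 * n1 = 8) (g2 : D2 + D3 + 2 * n2 = 8)
    (g3 : D3 + D4 + 2 * n3 = 8) (g4 : D4 + D0 + 2 * n4 = 8)
    (ht : 2 * (C0 + C1 + C2 + C3 + C4 + C5 + C6 + C7) + 2 * (D0 + D1 + D2 + D3 + D4) = 8 * 5) :
    False := by
  omega
lemma arith76 (C0 C1 C2 C3 C4 C5 C6 D0 D1 D2 D3 D4 D5 m0 m1 m2 m3 m4 m5 m6 n0 n1 n2 n3 n4 n5 : ℕ)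
    (hc0 : 1 ≤ C0) (hc1 : 1 ≤ C1) (hc2 : 1 ≤ C2) (hc3 : 1 ≤ C3) (hc4 : 1 ≤ C4) (hc5 : 1 ≤ C5)
    (hc6 : 1 ≤ C6)
    (hd0 : 1 ≤ D0) (hd1 : 1 ≤ D1) (hd2 : 1 ≤ D2) (hd3 : 1 ≤ D3) (hd4 : 1 ≤ D4) (hd5 : 1 ≤ D5)
    (h0 : C0 + C1 + 2 * m0 = 6) (h1 : C1 + C2 + 2 * m1 = 6) (h2 : C2 + C3 + 2 * m2 = 6)
    (h3 : C3 + C4 + 2 * m3 = 6) (h4 : C4 + C5 + 2 * m4 = 6) (h5 : C5 + C6 + 2 * m5 = 6)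
    (h6 : C6 + C0 + 2 * m6 = 6)
    (g0 : D0 + D1 + 2 * n0 = 7) (g1 : D1 + D2 + 2 * n1 = 7) (g2 : D2 + D3 + 2 * n2 = 7)
    (g3 : D3 + D4 + 2 * n3 = 7) (g4 : D4 + D5 + 2 * n4 = 7) (g5 : D5 + D0 + 2 * n5 = 7)
    (ht : 2 * (C0 + C1 + C2 + C3 + C4 + C5 + C6) + 2 * (D0 + D1 + D2 + D3 + D4 + D5) = 7 * 6) :
    False := by
  omega

end TorAux

/-- None of the torus boards `6′ × 5′`, `8′ × 5′`, and `7′ × 6′` admits a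
fault-free domino tiling. -/
theorem tor_not_faultFree_small :
    ¬ torFaultFreeTileable 6 5 ∧ ¬ torFaultFreeTileable 8 5 ∧
      ¬ torFaultFreeTileable 7 6 := by
  refine ⟨?_, ?_, ?_⟩
  · intro h
    obtain ⟨c, d, hc, hd, hr, hcl, htot⟩ :=
      TorAux.tor_counts (a := 6) (b := 5) (by norm_num) (by norm_num) h
    have hs1 : ∑ i, c i = c 0 + c 1 + c 2 + c 3 + c 4 + c 5 := by
      show ∑ i : Fin 6, c i = _
      exact Fin.sum_univ_six c
    have hs2 : ∑ j, d j = d 0 + d 1 + d 2 + d 3 + d 4 := by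
      show ∑ j : Fin 5, d j = _
      exact Fin.sum_univ_five d
    rw [hs1, hs2] at htot
    obtain ⟨m0, hm0⟩ := hr 0
    obtain ⟨m1, hm1⟩ := hr 1
    obtain ⟨m2, hm2⟩ := hr 2
    obtain ⟨m3, hm3⟩ := hr 3
    obtain ⟨m4, hm4⟩ := hr 4
    obtain ⟨m5, hm5⟩ := hr 5
    obtain ⟨n0, hn0⟩ := hcl 0
    obtain ⟨n1, hn1⟩ := hcl 1
    obtain ⟨n2, hn2⟩ := hcl 2
    obtain ⟨n3, hn3⟩ := hcl 3
    obtain ⟨n4, hn4⟩ := hcl 4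
    rw [show ((0 : ZMod 6) + 1) = 1 by decide] at hm0
    rw [show ((1 : ZMod 6) + 1) = 2 by decide] at hm1
    rw [show ((2 : ZMod 6) + 1) = 3 by decide] at hm2
    rw [show ((3 : ZMod 6) + 1) = 4 by decide] at hm3
    rw [show ((4 : ZMod 6) + 1) = 5 by decide] at hm4
    rw [show ((5 : ZMod 6) + 1) = 0 by decide] at hm5
    rw [show ((0 : ZMod 5) + 1) = 1 by decide] at hn0
    rw [show ((1 : ZMod 5) + 1) = 2 by decide] at hn1
    rw [show ((2 : ZMod 5) + 1) = 3 by decide] at hn2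
    rw [show ((3 : ZMod 5) + 1) = 4 by decide] at hn3
    rw [show ((4 : ZMod 5) + 1) = 0 by decide] at hn4
    exact TorAux.arith65 _ _ _ _ _ _ _ _ _ _ _ _ _ _ _ _ _ _ _ _ _ _
      (hc 0) (hc 1) (hc 2) (hc 3) (hc 4) (hc 5)
      (hd 0) (hd 1) (hd 2) (hd 3) (hd 4)
      hm0 hm1 hm2 hm3 hm4 hm5 hn0 hn1 hn2 hn3 hn4 htot
  · intro h
    obtain ⟨c, d, hc, hd, hr, hcl, htot⟩ :=
      TorAux.tor_counts (a := 8) (b := 5) (by norm_num) (by norm_num) h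
    have hs1 : ∑ i, c i = c 0 + c 1 + c 2 + c 3 + c 4 + c 5 + c 6 + c 7 := by
      show ∑ i : Fin 8, c i = _
      exact Fin.sum_univ_eight c
    have hs2 : ∑ j, d j = d 0 + d 1 + d 2 + d 3 + d 4 := by
      show ∑ j : Fin 5, d j = _
      exact Fin.sum_univ_five d
    rw [hs1, hs2] at htot
    obtain ⟨m0, hm0⟩ := hr 0
    obtain ⟨m1, hm1⟩ := hr 1
    obtain ⟨m2, hm2⟩ := hr 2
    obtain ⟨m3, hm3⟩ := hr 3
    obtain ⟨m4, hm4⟩ := hr 4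
    obtain ⟨m5, hm5⟩ := hr 5
    obtain ⟨m6, hm6⟩ := hr 6
    obtain ⟨m7, hm7⟩ := hr 7
    obtain ⟨n0, hn0⟩ := hcl 0
    obtain ⟨n1, hn1⟩ := hcl 1
    obtain ⟨n2, hn2⟩ := hcl 2
    obtain ⟨n3, hn3⟩ := hcl 3
    obtain ⟨n4, hn4⟩ := hcl 4
    rw [show ((0 : ZMod 8) + 1) = 1 by decide] at hm0
    rw [show ((1 : ZMod 8) + 1) = 2 by decide] at hm1
    rw [show ((2 : ZMod 8) + 1) = 3 by decide] at hm2
    rw [show ((3 : ZMod 8) + 1) = 4 by decide] at hm3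
    rw [show ((4 : ZMod 8) + 1) = 5 by decide] at hm4
    rw [show ((5 : ZMod 8) + 1) = 6 by decide] at hm5
    rw [show ((6 : ZMod 8) + 1) = 7 by decide] at hm6
    rw [show ((7 : ZMod 8) + 1) = 0 by decide] at hm7
    rw [show ((0 : ZMod 5) + 1) = 1 by decide] at hn0
    rw [show ((1 : ZMod 5) + 1) = 2 by decide] at hn1
    rw [show ((2 : ZMod 5) + 1) = 3 by decide] at hn2
    rw [show ((3 : ZMod 5) + 1) = 4 by decide] at hn3
    rw [show ((4 : ZMod 5) + 1) = 0 by decide] at hn4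
    exact TorAux.arith85 _ _ _ _ _ _ _ _ _ _ _ _ _ _ _ _ _ _ _ _ _ _ _ _ _ _
      (hc 0) (hc 1) (hc 2) (hc 3) (hc 4) (hc 5) (hc 6) (hc 7)
      (hd 0) (hd 1) (hd 2) (hd 3) (hd 4)
      hm0 hm1 hm2 hm3 hm4 hm5 hm6 hm7 hn0 hn1 hn2 hn3 hn4 htot
  · intro h
    obtain ⟨c, d, hc, hd, hr, hcl, htot⟩ :=
      TorAux.tor_counts (a := 7) (b := 6) (by norm_num) (by norm_num) h
    have hs1 : ∑ i, c i = c 0 + c 1 + c 2 + c 3 + c 4 + c 5 + c 6 := by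
      show ∑ i : Fin 7, c i = _
      exact Fin.sum_univ_seven c
    have hs2 : ∑ j, d j = d 0 + d 1 + d 2 + d 3 + d 4 + d 5 := by
      show ∑ j : Fin 6, d j = _
      exact Fin.sum_univ_six d
    rw [hs1, hs2] at htot
    obtain ⟨m0, hm0⟩ := hr 0
    obtain ⟨m1, hm1⟩ := hr 1
    obtain ⟨m2, hm2⟩ := hr 2
    obtain ⟨m3, hm3⟩ := hr 3
    obtain ⟨m4, hm4⟩ := hr 4
    obtain ⟨m5, hm5⟩ := hr 5
    obtain ⟨m6, hm6⟩ := hr 6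
    obtain ⟨n0, hn0⟩ := hcl 0
    obtain ⟨n1, hn1⟩ := hcl 1
    obtain ⟨n2, hn2⟩ := hcl 2
    obtain ⟨n3, hn3⟩ := hcl 3
    obtain ⟨n4, hn4⟩ := hcl 4
    obtain ⟨n5, hn5⟩ := hcl 5
    rw [show ((0 : ZMod 7) + 1) = 1 by decide] at hm0
    rw [show ((1 : ZMod 7) + 1) = 2 by decide] at hm1
    rw [show ((2 : ZMod 7) + 1) = 3 by decide] at hm2
    rw [show ((3 : ZMod 7) + 1) = 4 by decide] at hm3
    rw [show ((4 : ZMod 7) + 1) = 5 by decide] at hm4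
    rw [show ((5 : ZMod 7) + 1) = 6 by decide] at hm5
    rw [show ((6 : ZMod 7) + 1) = 0 by decide] at hm6
    rw [show ((0 : ZMod 6) + 1) = 1 by decide] at hn0
    rw [show ((1 : ZMod 6) + 1) = 2 by decide] at hn1
    rw [show ((2 : ZMod 6) + 1) = 3 by decide] at hn2
    rw [show ((3 : ZMod 6) + 1) = 4 by decide] at hn3
    rw [show ((4 : ZMod 6) + 1) = 5 by decide] at hn4
    rw [show ((5 : ZMod 6) + 1) = 0 by decide] at hn5
    exact TorAux.arith76 _ _ _ _ _ _ _ _ _ _ _ _ _ _ _ _ _ _ _ _ _ _ _ _ _ _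
      (hc 0) (hc 1) (hc 2) (hc 3) (hc 4) (hc 5) (hc 6)
      (hd 0) (hd 1) (hd 2) (hd 3) (hd 4) (hd 5)
      hm0 hm1 hm2 hm3 hm4 hm5 hm6 hn0 hn1 hn2 hn3 hn4 hn5 htot
end

section
/- For every natural number n, the Möbius strip board 4″×(4+2n) does not admit a fault-free domino tiling. -/
/-- Adjacency on the Möbius strip board `a″ × b` (height `a`, length `b`):
cells `(i,j)` and `(i+1,j)` (vertical neighbors), or `(i,j)` and `(i,j+1)`
(horizontal neighbors), or `(i, b-1)` and `(a-1-i, 0)` (horizontal neighbors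
across the half-twisted seam). -/
def mobAdj (a b : ℕ) (c d : Fin a × Fin b) : Prop :=
  (c.2 = d.2 ∧ ((c.1 : ℕ) + 1 = (d.1 : ℕ) ∨ (d.1 : ℕ) + 1 = (c.1 : ℕ))) ∨
  (c.1 = d.1 ∧ ((c.2 : ℕ) + 1 = (d.2 : ℕ) ∨ (d.2 : ℕ) + 1 = (c.2 : ℕ))) ∨
  ((c.2 : ℕ) = b - 1 ∧ (d.2 : ℕ) = 0 ∧ (d.1 : ℕ) = a - 1 - (c.1 : ℕ)) ∨
  ((d.2 : ℕ) = b - 1 ∧ (c.2 : ℕ) = 0 ∧ (c.1 : ℕ) = a - 1 - (d.1 : ℕ))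

/-- A tiling of the Möbius strip board: a set of dominoes (unordered pairs of
adjacent cells) such that every cell belongs to exactly one domino. -/
def mobIsTiling (a b : ℕ) (T : Set (Sym2 (Fin a × Fin b))) : Prop :=
  (∀ p ∈ T, ∃ c d, mobAdj a b c d ∧ p = s(c, d)) ∧
  (∀ x : Fin a × Fin b, ∃! p, p ∈ T ∧ x ∈ p)

/-- A tiling of the Möbius strip board is fault-free if:
* every horizontal fault-line indexed by `i` with `i + 1 < a` is crossed — because
  of the half-twist the cut between rows `i` and `i+1` is identified with the cut
  between rows `a-2-i` and `a-1-i`, so it is crossed by a vertical domino on rows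
  `(k, k+1)` with `k = i` or `k = a-2-i`;
* every vertical fault-line between columns `j` and `j+1` (for `j + 1 < b`) is
  crossed by a horizontal domino `{(i,j),(i,j+1)}`;
* the seam cut is crossed by a wrapping domino `{(i,b-1),(a-1-i,0)}`. -/
def mobFaultFree (a b : ℕ) (T : Set (Sym2 (Fin a × Fin b))) : Prop :=
  (∀ i : ℕ, i + 1 < a → ∃ c d : Fin a × Fin b,
      s(c, d) ∈ T ∧ c.2 = d.2 ∧ (d.1 : ℕ) = (c.1 : ℕ) + 1 ∧
      ((c.1 : ℕ) = i ∨ (c.1 : ℕ) = a - 2 - i)) ∧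
  (∀ j : ℕ, j + 1 < b → ∃ c d : Fin a × Fin b,
      s(c, d) ∈ T ∧ c.1 = d.1 ∧ (c.2 : ℕ) = j ∧ (d.2 : ℕ) = j + 1) ∧
  (∃ c d : Fin a × Fin b, s(c, d) ∈ T ∧ (c.2 : ℕ) = b - 1 ∧ (d.2 : ℕ) = 0 ∧
      (d.1 : ℕ) = a - 1 - (c.1 : ℕ))

/-- The Möbius strip board `a″ × b` admits a fault-free domino tiling. -/
def mobFaultFreeTileable (a b : ℕ) : Prop :=
  ∃ T : Set (Sym2 (Fin a × Fin b)), mobIsTiling a b T ∧ mobFaultFree a b T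

/- ### Auxiliary material -/

/-- A finset preserved by a fixed-point-free involution has even cardinality. -/
lemma mob_even_card_invol {α : Type*} (S : Finset α) (g : α → α)
    (hmem : ∀ x ∈ S, g x ∈ S) (hinv : ∀ x ∈ S, g (g x) = x) (hne : ∀ x ∈ S, g x ≠ x) :
    Even S.card := by
  have h : (∑ _x ∈ S, (1 : ZMod 2)) = 0 :=
    Finset.sum_involution (fun a _ => g a) (fun a _ => by decide)
      (fun a ha _ => hne a ha) (fun a ha => hmem a ha) (fun a ha => hinv a ha)
  rw [Finset.sum_const, nsmul_eq_mul, mul_one] at h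
  exact even_iff_two_dvd.mpr ((ZMod.natCast_eq_zero_iff S.card 2).mp h)

/-- The "head" of a domino, relative to the matching function `m`:
for a vertical domino the cell with the smaller row, for an internal horizontal
domino the cell with the smaller column, for a seam domino the cell in the last
column. -/
def mobIsHead (b : ℕ) (m : Fin 4 × Fin b → Fin 4 × Fin b) (x : Fin 4 × Fin b) : Prop :=
  (((m x).2 : ℕ) = (x.2 : ℕ) ∧ ((m x).1 : ℕ) = (x.1 : ℕ) + 1) ∨
  (((m x).2 : ℕ) = (x.2 : ℕ) + 1) ∨
  ((x.2 : ℕ) = b - 1 ∧ ((m x).2 : ℕ) = 0)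

/-- Auxiliary: no fault-free tiling of the `4 × b` Möbius board for even `b ≥ 4`. -/
lemma mob_aux (b : ℕ) (hb : 4 ≤ b) (hb2 : b % 2 = 0) : ¬ mobFaultFreeTileable 4 b := by
  intro hTT
  obtain ⟨T, ⟨hTadj, hTcov⟩, hffH, hffV, hffS⟩ := hTT
  classical
  -- adjacency is irreflexive and symmetric
  have hadj_ne : ∀ c d : Fin 4 × Fin b, mobAdj 4 b c d → c ≠ d := by
    intro c d h heq
    subst heq
    have h2 : (c.2 : ℕ) < b := c.2.isLt
    rcases h with ⟨-, h | h⟩ | ⟨-, h | h⟩ | ⟨h1, h1', -⟩ | ⟨h1, h1', -⟩ <;> omega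
  have hadj_symm : ∀ c d : Fin 4 × Fin b, mobAdj 4 b c d → mobAdj 4 b d c := by
    intro c d h
    rcases h with ⟨h1, h2⟩ | ⟨h1, h2⟩ | h | h
    · exact Or.inl ⟨h1.symm, h2.symm⟩
    · exact Or.inr (Or.inl ⟨h1.symm, h2.symm⟩)
    · exact Or.inr (Or.inr (Or.inr h))
    · exact Or.inr (Or.inr (Or.inl h))
  -- the matching function
  have hpart : ∀ x : Fin 4 × Fin b, ∃ y, s(x, y) ∈ T ∧ mobAdj 4 b x y := by
    intro x
    obtain ⟨p, ⟨hpT, hxp⟩, -⟩ := hTcov x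
    obtain ⟨c, d, hcd, rfl⟩ := hTadj p hpT
    rcases Sym2.mem_iff.mp hxp with rfl | rfl
    · exact ⟨d, hpT, hcd⟩
    · exact ⟨c, by rwa [Sym2.eq_swap], hadj_symm _ _ hcd⟩
  choose m hmT hmadj using hpart
  have hm_uniq : ∀ x y : Fin 4 × Fin b, s(x, y) ∈ T → y = m x := by
    intro x y hxy
    obtain ⟨p, -, hu⟩ := hTcov x
    have h1 : s(x, y) = p := hu _ ⟨hxy, Sym2.mem_mk_left x y⟩
    have h2 : s(x, m x) = p := hu _ ⟨hmT x, Sym2.mem_mk_left _ _⟩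
    exact Sym2.congr_right.mp (h1.trans h2.symm)
  have hm_invol : ∀ x, m (m x) = x := by
    intro x
    exact (hm_uniq (m x) x (by rw [Sym2.eq_swap]; exact hmT x)).symm
  have hm_ne : ∀ x, m x ≠ x := fun x h => hadj_ne x (m x) (hmadj x) h.symm
  -- trichotomy of domino types, on values
  have htri : ∀ x : Fin 4 × Fin b,
      (((m x).2 : ℕ) = (x.2 : ℕ) ∧
        ((x.1 : ℕ) + 1 = ((m x).1 : ℕ) ∨ ((m x).1 : ℕ) + 1 = (x.1 : ℕ))) ∨
      (((m x).1 : ℕ) = (x.1 : ℕ) ∧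
        ((x.2 : ℕ) + 1 = ((m x).2 : ℕ) ∨ ((m x).2 : ℕ) + 1 = (x.2 : ℕ))) ∨
      ((x.2 : ℕ) = b - 1 ∧ ((m x).2 : ℕ) = 0 ∧ ((m x).1 : ℕ) = 3 - (x.1 : ℕ)) ∨
      (((m x).2 : ℕ) = b - 1 ∧ (x.2 : ℕ) = 0 ∧ (x.1 : ℕ) = 3 - ((m x).1 : ℕ)) := by
    intro x
    have h := hmadj x
    have h1 := x.1.isLt
    have h2 := (m x).1.isLt
    rcases h with ⟨ha, hb'⟩ | ⟨ha, hb'⟩ | ⟨ha, hb', hc⟩ | ⟨ha, hb', hc⟩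
    · exact Or.inl ⟨(congrArg Fin.val ha).symm, hb'⟩
    · exact Or.inr (Or.inl ⟨(congrArg Fin.val ha).symm, hb'⟩)
    · exact Or.inr (Or.inr (Or.inl ⟨ha, hb', by omega⟩))
    · exact Or.inr (Or.inr (Or.inr ⟨ha, hb', by omega⟩))
  -- bounds, packaged for omega
  have hlt : ∀ x : Fin 4 × Fin b, (x.1 : ℕ) < 4 ∧ (x.2 : ℕ) < b ∧
      ((m x).1 : ℕ) < 4 ∧ ((m x).2 : ℕ) < b :=
    fun x => ⟨x.1.isLt, x.2.isLt, (m x).1.isLt, (m x).2.isLt⟩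
  -- head sets
  set Vh : Finset (Fin 4 × Fin b) := Finset.univ.filter
    (fun x => ((m x).2 : ℕ) = (x.2 : ℕ) ∧ ((m x).1 : ℕ) = (x.1 : ℕ) + 1) with hVh
  set Hh : Finset (Fin 4 × Fin b) := Finset.univ.filter
    (fun x => ((m x).2 : ℕ) = (x.2 : ℕ) + 1) with hHh
  set Wh : Finset (Fin 4 × Fin b) := Finset.univ.filter
    (fun x => (x.2 : ℕ) = b - 1 ∧ ((m x).2 : ℕ) = 0) with hWh
  set Wt : Finset (Fin 4 × Fin b) := Finset.univ.filter
    (fun x => (x.2 : ℕ) = 0 ∧ ((m x).2 : ℕ) = b - 1) with hWt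
  set Heads : Finset (Fin 4 × Fin b) := Finset.univ.filter (mobIsHead b m) with hHeads
  -- exactly one endpoint of each domino is a head
  have hdflip : ∀ x : Fin 4 × Fin b, mobIsHead b m (m x) ↔ ¬ mobIsHead b m x := by
    intro x
    have ht := htri x
    have hl := hlt x
    simp only [mobIsHead, hm_invol]
    omega
  -- total number of heads is 2b
  have hcardH : Heads.card = 2 * b := by
    have hcu : (Finset.univ : Finset (Fin 4 × Fin b)).card = 4 * b := by
      simp [Fintype.card_prod]
    have hsplit : Heads.card +
        (Finset.univ.filter (fun x => ¬ mobIsHead b m x)).card = 4 * b := by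
      rw [hHeads, Finset.card_filter_add_card_filter_not, hcu]
    have hbij : Heads.card =
        (Finset.univ.filter (fun x => ¬ mobIsHead b m x)).card := by
      apply Finset.card_bij (fun x _ => m x)
      · intro a ha
        simp only [hHeads, Finset.mem_filter, Finset.mem_univ, true_and] at ha ⊢
        exact fun hc => ((hdflip a).mp hc) ha
      · intro a1 h1 a2 h2 he
        have := congrArg m he
        rwa [hm_invol, hm_invol] at this
      · intro y hy
        simp only [Finset.mem_filter, Finset.mem_univ, true_and] at hy
        refine ⟨m y, ?_, hm_invol y⟩
        simp only [hHeads, Finset.mem_filter, Finset.mem_univ, true_and]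
        exact (hdflip y).mpr hy
    omega
  -- heads split into the three kinds
  have d1 : Disjoint Vh Hh := by
    rw [Finset.disjoint_left]
    intro x hx hx'
    simp only [hVh, hHh, Finset.mem_filter, Finset.mem_univ, true_and] at hx hx'
    omega
  have hcardsplit : Heads.card = Vh.card + Hh.card + Wh.card := by
    have he : Heads = (Vh ∪ Hh) ∪ Wh := by
      ext x
      simp only [hHeads, hVh, hHh, hWh, Finset.mem_filter, Finset.mem_univ, true_and,
        Finset.mem_union, mobIsHead]
      tauto
    have d2 : Disjoint (Vh ∪ Hh) Wh := by
      rw [Finset.disjoint_left]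
      intro x hx hx'
      have hl := hlt x
      simp only [hVh, hHh, hWh, Finset.mem_filter, Finset.mem_univ, true_and,
        Finset.mem_union] at hx hx'
      omega
    rw [he, Finset.card_union_of_disjoint d2, Finset.card_union_of_disjoint d1]
  -- the row-shift involution (i,j) ↦ (i+2 mod 4, j)
  have hmod4 : ∀ v : ℕ, (v + 2) % 4 < 4 := fun v => Nat.mod_lt _ (by norm_num)
  set ρ : Fin 4 × Fin b → Fin 4 × Fin b :=
    fun x => (⟨((x.1 : ℕ) + 2) % 4, hmod4 _⟩, x.2) with hρ
  have hρ1 : ∀ x : Fin 4 × Fin b, ((ρ x).1 : ℕ) = ((x.1 : ℕ) + 2) % 4 := fun x => rfl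
  have hρ2 : ∀ x : Fin 4 × Fin b, (ρ x).2 = x.2 := fun x => rfl
  have hρinv : ∀ x, ρ (ρ x) = x := by
    intro x
    have h1 := x.1.isLt
    refine Prod.ext ?_ rfl
    apply Fin.ext
    rw [hρ1, hρ1]
    omega
  have hρne : ∀ x, ρ x ≠ x := by
    intro x h
    have h2 := congrArg (fun p : Fin 4 × Fin b => (p.1 : ℕ)) h
    simp only [hρ1] at h2
    have h1 := x.1.isLt
    omega
  -- checkerboard: Vh.card + Hh.card is even
  have hVHeven : Even (Vh.card + Hh.card) := by
    set A : Finset (Fin 4 × Fin b) := Finset.univ.filter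
      (fun x => ((x.1 : ℕ) + (x.2 : ℕ)) % 2 = 0) with hA
    have hAeven : Even A.card := by
      apply mob_even_card_invol A ρ
      · intro x hx
        simp only [hA, Finset.mem_filter, Finset.mem_univ, true_and] at hx ⊢
        have h1 := x.1.isLt
        have h3 := hρ1 x
        have h4 := congrArg Fin.val (hρ2 x)
        omega
      · exact fun x _ => hρinv x
      · exact fun x _ => hρne x
    set Bd : Finset (Fin 4 × Fin b) := A.filter
      (fun x => ¬ (((m x).1 : ℕ) + ((m x).2 : ℕ)) % 2 = 0) with hBd
    have hInner : Even (A.filter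
        (fun x => (((m x).1 : ℕ) + ((m x).2 : ℕ)) % 2 = 0)).card := by
      apply mob_even_card_invol _ m
      · intro x hx
        simp only [hA, Finset.mem_filter, Finset.mem_univ, true_and, hm_invol] at hx ⊢
        exact ⟨hx.2, hx.1⟩
      · exact fun x _ => hm_invol x
      · exact fun x _ => hm_ne x
    have hsum : (A.filter (fun x => (((m x).1 : ℕ) + ((m x).2 : ℕ)) % 2 = 0)).card
        + Bd.card = A.card := by
      rw [hBd, Finset.card_filter_add_card_filter_not]
    have hBdeven : Even Bd.card := by
      obtain ⟨k1, hk1⟩ := hAeven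
      obtain ⟨k2, hk2⟩ := hInner
      exact ⟨k1 - k2, by omega⟩
    -- Bd is in bijection with Vh ∪ Hh
    have hBdcard : Bd.card = (Vh ∪ Hh).card := by
      apply Finset.card_bij' (fun x _ => if mobIsHead b m x then x else m x)
        (fun y _ => if ((y.1 : ℕ) + (y.2 : ℕ)) % 2 = 0 then y else m y)
      · -- forward membership
        intro x hx
        simp only [hBd, hA, Finset.mem_filter, Finset.mem_univ, true_and] at hx
        have ht := htri x
        have hl := hlt x
        by_cases hh : mobIsHead b m x
        · rw [if_pos hh]
          simp only [hVh, hHh, Finset.mem_union, Finset.mem_filter, Finset.mem_univ,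
            true_and]
          simp only [mobIsHead] at hh
          omega
        · rw [if_neg hh]
          simp only [hVh, hHh, Finset.mem_union, Finset.mem_filter, Finset.mem_univ,
            true_and, hm_invol]
          simp only [mobIsHead] at hh
          omega
      · -- backward membership
        intro y hy
        simp only [hVh, hHh, Finset.mem_union, Finset.mem_filter, Finset.mem_univ,
          true_and] at hy
        have ht := htri y
        have hl := hlt y
        by_cases hp : ((y.1 : ℕ) + (y.2 : ℕ)) % 2 = 0
        · rw [if_pos hp]
          simp only [hBd, hA, Finset.mem_filter, Finset.mem_univ, true_and]
          omega
        · rw [if_neg hp]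
          simp only [hBd, hA, Finset.mem_filter, Finset.mem_univ, true_and, hm_invol]
          omega
      · -- left inverse
        intro x hx
        simp only [hBd, hA, Finset.mem_filter, Finset.mem_univ, true_and] at hx
        have ht := htri x
        have hl := hlt x
        by_cases hh : mobIsHead b m x
        · rw [if_pos hh, if_pos hx.1]
        · rw [if_neg hh]
          have hq : ¬ (((m x).1 : ℕ) + ((m x).2 : ℕ)) % 2 = 0 := hx.2
          rw [if_neg hq, hm_invol]
      · -- right inverse
        intro y hy
        simp only [hVh, hHh, Finset.mem_union, Finset.mem_filter, Finset.mem_univ,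
          true_and] at hy
        have hhy : mobIsHead b m y := by
          simp only [mobIsHead]
          tauto
        by_cases hp : ((y.1 : ℕ) + (y.2 : ℕ)) % 2 = 0
        · rw [if_pos hp, if_pos hhy]
        · rw [if_neg hp]
          have hnh : ¬ mobIsHead b m (m y) := fun h => (hdflip y).mp h hhy
          rw [if_neg hnh, hm_invol]
    rwa [hBdcard, Finset.card_union_of_disjoint d1] at hBdeven
  -- Wh and Wt are in bijection (via m)
  have hWcard : Wh.card = Wt.card := by
    apply Finset.card_bij (fun x _ => m x)
    · intro a ha
      simp only [hWh, hWt, Finset.mem_filter, Finset.mem_univ, true_and, hm_invol] at ha ⊢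
      exact ⟨ha.2, ha.1⟩
    · intro a1 h1 a2 h2 he
      have := congrArg m he
      rwa [hm_invol, hm_invol] at this
    · intro y hy
      simp only [hWh, hWt, Finset.mem_filter, Finset.mem_univ, true_and] at hy
      refine ⟨m y, ?_, hm_invol y⟩
      simp only [hWh, Finset.mem_filter, Finset.mem_univ, true_and, hm_invol]
      exact ⟨hy.2, hy.1⟩
  -- parity of each vertical cut
  have hcut : ∀ j : ℕ, j + 1 < b →
      Even ((Hh.filter (fun x => (x.2 : ℕ) = j)).card + Wt.card) := by
    intro j hj
    set L : Finset (Fin 4 × Fin b) := Finset.univ.filter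
      (fun x => (x.2 : ℕ) ≤ j) with hL
    have hLeven : Even L.card := by
      apply mob_even_card_invol L ρ
      · intro x hx
        simp only [hL, Finset.mem_filter, Finset.mem_univ, true_and] at hx ⊢
        have := congrArg (fun y : Fin b => (y : ℕ)) (hρ2 x)
        omega
      · exact fun x _ => hρinv x
      · exact fun x _ => hρne x
    have hInner : Even (L.filter (fun x => ((m x).2 : ℕ) ≤ j)).card := by
      apply mob_even_card_invol _ m
      · intro x hx
        simp only [hL, Finset.mem_filter, Finset.mem_univ, true_and, hm_invol] at hx ⊢
        exact ⟨hx.2, hx.1⟩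
      · exact fun x _ => hm_invol x
      · exact fun x _ => hm_ne x
    have hsum : (L.filter (fun x => ((m x).2 : ℕ) ≤ j)).card
        + (L.filter (fun x => ¬ ((m x).2 : ℕ) ≤ j)).card = L.card := by
      rw [Finset.card_filter_add_card_filter_not]
    have hsplit : L.filter (fun x => ¬ ((m x).2 : ℕ) ≤ j)
        = (Hh.filter (fun x => (x.2 : ℕ) = j)) ∪ Wt := by
      ext x
      have ht := htri x
      have hl := hlt x
      simp only [hL, hHh, hWt, Finset.mem_filter, Finset.mem_univ, true_and,
        Finset.mem_union]
      omega
    have hdisj : Disjoint (Hh.filter (fun x => (x.2 : ℕ) = j)) Wt := by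
      rw [Finset.disjoint_left]
      intro x hx hx'
      simp only [hHh, hWt, Finset.mem_filter, Finset.mem_univ, true_and] at hx hx'
      omega
    have hout : Even ((Hh.filter (fun x => (x.2 : ℕ) = j)).card + Wt.card) := by
      obtain ⟨k1, hk1⟩ := hLeven
      obtain ⟨k2, hk2⟩ := hInner
      have := hsplit ▸ hsum
      rw [Finset.card_union_of_disjoint hdisj] at this
      exact ⟨k1 - k2, by omega⟩
    exact hout
  -- fault-free conditions give nonemptiness
  have hV1 : 1 ≤ Vh.card := by
    obtain ⟨c, d, hcd, hc2, hd1, -⟩ := hffH 0 (by omega)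
    have hdm : d = m c := hm_uniq c d hcd
    have hc : c ∈ Vh := by
      simp only [hVh, Finset.mem_filter, Finset.mem_univ, true_and, ← hdm]
      exact ⟨(congrArg Fin.val hc2).symm, hd1⟩
    exact Finset.card_pos.mpr ⟨c, hc⟩
  have hW1 : 1 ≤ Wh.card := by
    obtain ⟨c, d, hcd, hc2, hd2, -⟩ := hffS
    have hdm : d = m c := hm_uniq c d hcd
    have hc : c ∈ Wh := by
      simp only [hWh, Finset.mem_filter, Finset.mem_univ, true_and, ← hdm]
      exact ⟨hc2, hd2⟩
    exact Finset.card_pos.mpr ⟨c, hc⟩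
  have hC1 : ∀ j : ℕ, j + 1 < b →
      1 ≤ (Hh.filter (fun x => (x.2 : ℕ) = j)).card := by
    intro j hj
    obtain ⟨c, d, hcd, hc1, hc2, hd2⟩ := hffV j hj
    have hdm : d = m c := hm_uniq c d hcd
    have hc : c ∈ Hh.filter (fun x => (x.2 : ℕ) = j) := by
      simp only [hHh, Finset.mem_filter, Finset.mem_univ, true_and, ← hdm]
      exact ⟨by omega, hc2⟩
    exact Finset.card_pos.mpr ⟨c, hc⟩
  -- Wh has even cardinality, hence ≥ 2
  have hWh2 : 2 ≤ Wh.card := by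
    obtain ⟨k, hk⟩ := hVHeven
    omega
  have hWteven : Even Wt.card := by
    obtain ⟨k, hk⟩ := hVHeven
    exact ⟨Wh.card / 2, by omega⟩
  -- each cut is crossed at least twice
  have hC2 : ∀ j : ℕ, j + 1 < b →
      2 ≤ (Hh.filter (fun x => (x.2 : ℕ) = j)).card := by
    intro j hj
    obtain ⟨k1, hk1⟩ := hcut j hj
    obtain ⟨k2, hk2⟩ := hWteven
    have := hC1 j hj
    omega
  -- summing over the cuts
  have hHh2 : 2 * (b - 1) ≤ Hh.card := by
    have hfib : Hh.card = ∑ j ∈ Finset.range (b - 1),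
        (Hh.filter (fun x => (x.2 : ℕ) = j)).card := by
      apply Finset.card_eq_sum_card_fiberwise
      intro x hx
      simp only [hHh, Finset.mem_coe, Finset.mem_filter, Finset.mem_univ, true_and] at hx
      have hl := hlt x
      exact Finset.mem_range.mpr (by show (x.2 : ℕ) < b - 1; omega)
    have hge : ∑ j ∈ Finset.range (b - 1), 2
        ≤ ∑ j ∈ Finset.range (b - 1), (Hh.filter (fun x => (x.2 : ℕ) = j)).card := by
      apply Finset.sum_le_sum
      intro j hjmem
      exact hC2 j (by have := Finset.mem_range.mp hjmem; omega)
    have hconst : ∑ _j ∈ Finset.range (b - 1), (2 : ℕ) = (b - 1) * 2 := by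
      rw [Finset.sum_const, Finset.card_range, smul_eq_mul]
    omega
  -- final contradiction: 2b = Vh + Hh + Wh ≥ 1 + 2(b-1) + 2 = 2b + 1
  omega

/-- For every natural number `n`, the Möbius strip board `4″ × (4+2n)` does not
admit a fault-free domino tiling. -/
theorem mob_not_faultFree_4''42n :
    ∀ n : ℕ, ¬ mobFaultFreeTileable 4 (4 + 2 * n) := by
  intro n
  exact mob_aux (4 + 2 * n) (by omega) (by omega)
end
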